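/- arXiv:2212.04893 — 6 statements merged into one kernel-verified Lean document; each statement's English description precedes it below -/
import Mathlib

section
/- Under the modular setup below, T ≤ A. (In CFT language: the twist gap τ_gap = 2T of a unitary modular-invariant 2D CFT with central charge c = 1 + 24A > 1 satisfies τ_gap ≤ (c−1)/12.) -/
open MeasureTheory Filter

private lemma aux_vlb (x : ℝ) : x * Real.exp (-x) ≤ 1 - Real.exp (-x) := by
  have h : Real.exp x * Real.exp (-x) = 1 := by rw [← Real.exp_add]; simp
  nlinarith [Real.add_one_le_exp x, Real.exp_pos (-x)]

private lemma aux_cube (x : ℝ) (hx : 0 ≤ x) : x ^ 3 / 27 ≤ Real.exp x := by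
  have h1 : x / 3 ≤ Real.exp (x / 3) := by nlinarith [Real.add_one_le_exp (x / 3)]
  have h2 : (x / 3) ^ 3 ≤ (Real.exp (x / 3)) ^ 3 := pow_le_pow_left₀ (by positivity) h1 3
  calc x ^ 3 / 27 = (x / 3) ^ 3 := by ring
    _ ≤ (Real.exp (x / 3)) ^ 3 := h2
    _ = Real.exp x := by rw [← Real.exp_nat_mul]; ring_nf

private lemma aux_sqrt_le (c : ℝ) (h : 1 ≤ c) : Real.sqrt c ≤ c := by
  nlinarith [Real.sq_sqrt (by linarith : (0:ℝ) ≤ c), Real.sqrt_nonneg c,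
    Real.sqrt_le_sqrt h]

private lemma aux_contra (A T P : ℝ) (hA : 0 < A) (hT : 0 < T) (hP : 0 < P)
    (key : ∀ c : ℝ, 1 ≤ c →
      Real.exp (P * A / c - A * c - P * A + A) / Real.sqrt c * (1 - Real.exp (-(P / c))) ≤
        Real.exp (-((c - 1) * T)) * (1 - Real.exp (-P))) :
    T ≤ A := by
  by_contra hcon
  push_neg at hcon
  have hε : 0 < T - A := by linarith
  have hC₂ : 0 < P * Real.exp (A - P * A - P) := by positivity
  have hD : 0 < Real.exp T := Real.exp_pos T
  have final : ∀ c : ℝ, 1 ≤ c →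
      Real.exp ((T - A) * c) * (P * Real.exp (A - P * A - P)) ≤ Real.exp T * c ^ 2 := by
    intro c hc1
    have hc : 0 < c := lt_of_lt_of_le one_pos hc1
    have keyc := key c hc1
    have la : Real.exp (-(A * c) + A - P * A) ≤ Real.exp (P * A / c - A * c - P * A + A) := by
      apply Real.exp_le_exp.2
      have : 0 ≤ P * A / c := by positivity
      linarith
    have lb : Real.sqrt c ≤ c := aux_sqrt_le c hc1
    have d1 : Real.exp (-(A * c) + A - P * A) / c ≤
        Real.exp (P * A / c - A * c - P * A + A) / Real.sqrt c :=
      div_le_div₀ (Real.exp_pos _).le la (Real.sqrt_pos.2 hc) lb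
    have lV : P / c * Real.exp (-P) ≤ 1 - Real.exp (-(P / c)) := by
      have h1 := aux_vlb (P / c)
      have h2 : Real.exp (-P) ≤ Real.exp (-(P / c)) := by
        apply Real.exp_le_exp.2
        have : P / c ≤ P := div_le_self hP.le hc1
        linarith
      have h3 : P / c * Real.exp (-P) ≤ P / c * Real.exp (-(P / c)) :=
        mul_le_mul_of_nonneg_left h2 (by positivity)
      linarith
    have lowLHS : Real.exp (-(A * c) + A - P * A) / c * (P / c * Real.exp (-P)) ≤
        Real.exp (P * A / c - A * c - P * A + A) / Real.sqrt c * (1 - Real.exp (-(P / c))) :=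
      mul_le_mul d1 lV (by positivity) (by positivity)
    have up : Real.exp (-((c - 1) * T)) * (1 - Real.exp (-P)) ≤ Real.exp (-((c - 1) * T)) := by
      nlinarith [(Real.exp_pos (-((c - 1) * T))).le, Real.exp_pos (-P)]
    have combined : Real.exp (-(A * c) + A - P * A) / c * (P / c * Real.exp (-P)) ≤
        Real.exp (-((c - 1) * T)) := le_trans lowLHS (le_trans keyc up)
    have comb2 : Real.exp (-(A * c) + A - P * A) * (P * Real.exp (-P)) ≤
        Real.exp (-((c - 1) * T)) * c ^ 2 := by
      have hm := mul_le_mul_of_nonneg_right combined (by positivity : (0:ℝ) ≤ c ^ 2)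
      calc Real.exp (-(A * c) + A - P * A) * (P * Real.exp (-P))
          = Real.exp (-(A * c) + A - P * A) / c * (P / c * Real.exp (-P)) * c ^ 2 := by
            field_simp
        _ ≤ Real.exp (-((c - 1) * T)) * c ^ 2 := hm
    have hm2 := mul_le_mul_of_nonneg_right comb2 (Real.exp_pos (T * c)).le
    have e1 : Real.exp (-(A * c) + A - P * A) * (P * Real.exp (-P)) * Real.exp (T * c) =
        Real.exp ((T - A) * c) * (P * Real.exp (A - P * A - P)) := by
      have h : Real.exp (-(A * c) + A - P * A) * Real.exp (-P) * Real.exp (T * c) =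
          Real.exp ((T - A) * c) * Real.exp (A - P * A - P) := by
        rw [← Real.exp_add, ← Real.exp_add, ← Real.exp_add]; congr 1; ring
      linear_combination P * h
    have e2 : Real.exp (-((c - 1) * T)) * c ^ 2 * Real.exp (T * c) = Real.exp T * c ^ 2 := by
      have h : Real.exp (-((c - 1) * T)) * Real.exp (T * c) = Real.exp T := by
        rw [← Real.exp_add]; congr 1; ring
      calc Real.exp (-((c - 1) * T)) * c ^ 2 * Real.exp (T * c)
          = Real.exp (-((c - 1) * T)) * Real.exp (T * c) * c ^ 2 := by ring
        _ = Real.exp T * c ^ 2 := by rw [h]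
    rw [e1, e2] at hm2
    exact hm2
  set c₀ : ℝ := max 1 (27 * Real.exp T / ((T - A) ^ 3 * (P * Real.exp (A - P * A - P))) + 1)
    with hc₀def
  have h1c : (1:ℝ) ≤ c₀ := le_max_left _ _
  have hc₀ : 0 < c₀ := lt_of_lt_of_le one_pos h1c
  have h1 := final c₀ h1c
  have h2 := aux_cube ((T - A) * c₀) (by positivity)
  have h3 : 27 * Real.exp T / ((T - A) ^ 3 * (P * Real.exp (A - P * A - P))) + 1 ≤ c₀ :=
    le_max_right _ _
  have hpos : 0 < (T - A) ^ 3 * (P * Real.exp (A - P * A - P)) := by positivity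
  have h4 : 27 * Real.exp T < (T - A) ^ 3 * (P * Real.exp (A - P * A - P)) * c₀ := by
    have h5 : (T - A) ^ 3 * (P * Real.exp (A - P * A - P)) *
        (27 * Real.exp T / ((T - A) ^ 3 * (P * Real.exp (A - P * A - P))) + 1) =
        27 * Real.exp T + (T - A) ^ 3 * (P * Real.exp (A - P * A - P)) := by
      field_simp
    nlinarith [mul_le_mul_of_nonneg_left h3 hpos.le]
  nlinarith [mul_le_mul_of_nonneg_right h2 hC₂.le,
    mul_lt_mul_of_pos_right h4 (pow_pos hc₀ 2), h1, pow_pos hc₀ 2]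

/-- The reduced partition function
`Z̃(β, β̄) = (1-e^{-β})(1-e^{-β̄}) + ∫ e^{-βh - β̄h̄} dμ(h,h̄)`. -/
noncomputable def Ztil (μ : Measure (ℝ × ℝ)) (β βb : ℝ) : ℝ :=
  (1 - Real.exp (-β)) * (1 - Real.exp (-βb)) +
    ∫ p : ℝ × ℝ, Real.exp (-β * p.1 - βb * p.2) ∂μ

/-- The modular crossing kernel
`K(β, β̄) = (2π/√(ββ̄)) exp(4π²A/β + 4π²A/β̄ - Aβ - Aβ̄)`. -/
noncomputable def Kker (A β βb : ℝ) : ℝ :=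
  2 * Real.pi / Real.sqrt (β * βb) *
    Real.exp (4 * Real.pi ^ 2 * A / β + 4 * Real.pi ^ 2 * A / βb - A * β - A * βb)

/-- Theorem 3.1(a): in the modular setup, `T ≤ A`, i.e. the twist gap
`τ_gap = 2T` satisfies `τ_gap ≤ (c-1)/12` where `c = 1 + 24A`. -/
theorem stmt14 (A T : ℝ) (hA : 0 < A) (hT : 0 < T) (μ : Measure (ℝ × ℝ))
    (hsupp : μ {p : ℝ × ℝ | p.1 < T ∨ p.2 < T} = 0)
    (hint : ∀ β βb : ℝ, 0 < β → 0 < βb →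
      Integrable (fun p : ℝ × ℝ => Real.exp (-β * p.1 - βb * p.2)) μ)
    (hmod : ∀ β βb : ℝ, 0 < β → 0 < βb →
      Ztil μ β βb = Kker A β βb * Ztil μ (4 * Real.pi ^ 2 / β) (4 * Real.pi ^ 2 / βb)) :
    T ≤ A := by
  set P : ℝ := 4 * Real.pi ^ 2 with hPdef
  have hP : 0 < P := by positivity
  set I : ℝ → ℝ → ℝ := fun β c => ∫ p : ℝ × ℝ, Real.exp (-β * p.1 - c * p.2) ∂μ with hIdef
  set v : ℝ → ℝ := fun x => 1 - Real.exp (-x) with hvdef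
  have hZdef : ∀ β c : ℝ, Ztil μ β c = v β * v c + I β c := fun β c => rfl
  have hvnn : ∀ x : ℝ, 0 ≤ x → 0 ≤ v x := by
    intro x hx
    have h1 : Real.exp (-x) ≤ Real.exp 0 := Real.exp_le_exp.2 (by linarith)
    rw [Real.exp_zero] at h1
    simp only [hvdef]; linarith
  have hvle1 : ∀ x : ℝ, v x ≤ 1 := by
    intro x; simp only [hvdef]; have := Real.exp_pos (-x); linarith
  have hae : ∀ᵐ p : ℝ × ℝ ∂μ, T ≤ p.1 ∧ T ≤ p.2 := by
    rw [ae_iff]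
    have hs : {p : ℝ × ℝ | ¬(T ≤ p.1 ∧ T ≤ p.2)} = {p : ℝ × ℝ | p.1 < T ∨ p.2 < T} := by
      ext p
      rw [Set.mem_setOf_eq, Set.mem_setOf_eq, not_and_or, not_le, not_le]
    rw [hs]; exact hsupp
  have hInn : ∀ β c : ℝ, 0 ≤ I β c := fun β c =>
    integral_nonneg fun p => (Real.exp_pos _).le
  -- monotonicity in the first argument
  have hmono1 : ∀ β₁ β₂ c : ℝ, 0 < β₁ → β₁ ≤ β₂ → 0 < c →
      I β₂ c ≤ Real.exp (-((β₂ - β₁) * T)) * I β₁ c := by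
    intro β₁ β₂ c hβ₁ hβ c1
    have hβ₂ : 0 < β₂ := lt_of_lt_of_le hβ₁ hβ
    simp only [hIdef]
    rw [← integral_const_mul]
    refine integral_mono_ae (hint β₂ c hβ₂ c1)
      ((hint β₁ c hβ₁ c1).const_mul (Real.exp (-((β₂ - β₁) * T)))) ?_
    filter_upwards [hae] with p hp
    rw [← Real.exp_add]
    apply Real.exp_le_exp.2
    nlinarith [hp.1]
  -- monotonicity in the second argument
  have hmono2 : ∀ β c₁ c₂ : ℝ, 0 < β → 0 < c₁ → c₁ ≤ c₂ →
      I β c₂ ≤ Real.exp (-((c₂ - c₁) * T)) * I β c₁ := by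
    intro β c₁ c₂ hβ hc₁ hc
    have hc₂ : 0 < c₂ := lt_of_lt_of_le hc₁ hc
    simp only [hIdef]
    rw [← integral_const_mul]
    refine integral_mono_ae (hint β c₂ hβ hc₂)
      ((hint β c₁ hβ hc₁).const_mul (Real.exp (-((c₂ - c₁) * T)))) ?_
    filter_upwards [hae] with p hp
    rw [← Real.exp_add]
    apply Real.exp_le_exp.2
    nlinarith [hp.2]
  -- I L c → 0 as L → ∞
  have hIlim : ∀ c : ℝ, 0 < c → Tendsto (fun L => I L c) atTop (nhds 0) := by
    intro c hc
    have hb : Tendsto (fun L : ℝ => (L - 1) * T) atTop atTop :=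
      (tendsto_atTop_add_const_right _ _ tendsto_id).atTop_mul_const hT
    have h1 : Tendsto (fun L : ℝ => -((L - 1) * T)) atTop atBot :=
      tendsto_neg_atTop_atBot.comp hb
    have hg : Tendsto (fun L : ℝ => Real.exp (-((L - 1) * T)) * I 1 c) atTop (nhds 0) := by
      have := (Real.tendsto_exp_atBot.comp h1).mul_const (I 1 c)
      simpa using this
    refine squeeze_zero' ?_ ?_ hg
    · filter_upwards with L; exact hInn L c
    · filter_upwards [eventually_ge_atTop 1] with L hL
      exact hmono1 1 L c one_pos hL hc
  have hvlim : Tendsto (fun L : ℝ => v L) atTop (nhds 1) := by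
    have he : Tendsto (fun L : ℝ => Real.exp (-L)) atTop (nhds 0) :=
      Real.tendsto_exp_atBot.comp tendsto_neg_atTop_atBot
    have h2 := ((tendsto_const_nhds : Tendsto (fun _ : ℝ => (1:ℝ)) atTop (nhds 1)).sub he)
    simpa [hvdef] using h2
  have hZlim : ∀ c : ℝ, 0 < c → Tendsto (fun L => Ztil μ L c) atTop (nhds (v c)) := by
    intro c hc
    have h := (hvlim.mul_const (v c)).add (hIlim c hc)
    simp only [one_mul, add_zero] at h
    simpa only [hZdef] using h
  have hKpos : ∀ s c : ℝ, 0 < s → 0 < c → 0 < Kker A s c := by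
    intro s c hs hc
    rw [Kker]
    have h1 : 0 < Real.sqrt (s * c) := Real.sqrt_pos.2 (by positivity)
    positivity
  -- lower bound for Kker A s 1 when 0 < s ≤ 1
  set K₀ : ℝ := 2 * Real.pi * Real.exp (2 * P * A - 2 * A) with hK₀def
  have hK₀pos : 0 < K₀ := by rw [hK₀def]; positivity
  have hKlb : ∀ s : ℝ, 0 < s → s ≤ 1 → K₀ ≤ Kker A s 1 := by
    intro s hs hs1
    rw [Kker, mul_one]
    have hsq : 0 < Real.sqrt s := Real.sqrt_pos.2 hs
    have hsq1 : Real.sqrt s ≤ 1 := by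
      rw [show (1:ℝ) = Real.sqrt 1 by simp]
      exact Real.sqrt_le_sqrt hs1
    have ha : 2 * Real.pi ≤ 2 * Real.pi / Real.sqrt s := by
      rw [le_div_iff₀ hsq]
      nlinarith [Real.pi_pos]
    have h0 : (0:ℝ) ≤ 4 * Real.pi ^ 2 * A := by positivity
    have hq : 4 * Real.pi ^ 2 * A ≤ 4 * Real.pi ^ 2 * A / s := by
      rw [le_div_iff₀ hs]
      nlinarith [h0]
    have hb : Real.exp (2 * P * A - 2 * A) ≤
        Real.exp (4 * Real.pi ^ 2 * A / s + 4 * Real.pi ^ 2 * A / 1 - A * s - A * 1) := by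
      apply Real.exp_le_exp.2
      rw [hPdef]
      have : A * s ≤ A := by nlinarith
      rw [div_one]
      linarith
    calc K₀ = 2 * Real.pi * Real.exp (2 * P * A - 2 * A) := hK₀def
      _ ≤ 2 * Real.pi / Real.sqrt s *
          Real.exp (4 * Real.pi ^ 2 * A / s + 4 * Real.pi ^ 2 * A / 1 - A * s - A * 1) :=
        mul_le_mul ha hb (Real.exp_pos _).le (by positivity)
  -- the key inequality
  have key : ∀ c : ℝ, 1 ≤ c →
      Real.exp (P * A / c - A * c - P * A + A) / Real.sqrt c * v (P / c) ≤
        Real.exp (-((c - 1) * T)) * v P := by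
    intro c hc1
    have hc : 0 < c := lt_of_lt_of_le one_pos hc1
    set R : ℝ := Real.exp (P * A / c - A * c - P * A + A) / Real.sqrt c with hRdef
    have hKratio : ∀ s : ℝ, 0 < s → Kker A s c / Kker A s 1 = R := by
      intro s hs
      rw [Kker, Kker, mul_one, Real.sqrt_mul hs.le, hRdef]
      have h1 : Real.sqrt s ≠ 0 := ne_of_gt (Real.sqrt_pos.2 hs)
      have h2 : Real.sqrt c ≠ 0 := ne_of_gt (Real.sqrt_pos.2 hc)
      have hE : Real.exp (4 * Real.pi ^ 2 * A / s + 4 * Real.pi ^ 2 * A / c - A * s - A * c) =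
          Real.exp (P * A / c - A * c - P * A + A) *
            Real.exp (4 * Real.pi ^ 2 * A / s + 4 * Real.pi ^ 2 * A / 1 - A * s - A * 1) := by
        rw [← Real.exp_add]; congr 1; rw [hPdef]; field_simp; ring
      rw [hE]
      have h3 := Real.exp_ne_zero
        (4 * Real.pi ^ 2 * A / s + 4 * Real.pi ^ 2 * A / 1 - A * s - A * 1)
      have h4 : (2 : ℝ) * Real.pi ≠ 0 := by positivity
      field_simp
    -- eventual inequality in L
    have hev : ∀ᶠ L : ℝ in atTop,
        R * Ztil μ L (P / c) ≤
          (v (P / L) * v c) / Kker A (P / L) 1 + Real.exp (-((c - 1) * T)) * Ztil μ L P := by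
      filter_upwards [eventually_gt_atTop 0] with L hL
      have hs : 0 < P / L := div_pos hP hL
      have hsL : P / (P / L) = L := div_div_cancel₀ hP.ne'
      have e1 : Ztil μ (P / L) c = Kker A (P / L) c * Ztil μ L (P / c) := by
        have h := hmod (P / L) c hs hc
        rwa [hsL] at h
      have e2 : Ztil μ (P / L) 1 = Kker A (P / L) 1 * Ztil μ L P := by
        have h := hmod (P / L) 1 hs one_pos
        rwa [hsL, div_one] at h
      have hK1 := hKpos (P / L) 1 hs one_pos
      have step1 : Kker A (P / L) c * Ztil μ L (P / c) ≤
          v (P / L) * v c + Real.exp (-((c - 1) * T)) * (Kker A (P / L) 1 * Ztil μ L P) := by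
        rw [← e1, ← e2, hZdef (P / L) c, hZdef (P / L) 1]
        have h3 := hmono2 (P / L) 1 c hs one_pos hc1
        have h4 : 0 ≤ v (P / L) * v 1 :=
          mul_nonneg (hvnn _ hs.le) (hvnn 1 one_pos.le)
        nlinarith [(Real.exp_pos (-((c - 1) * T))).le,
          mul_nonneg (Real.exp_pos (-((c - 1) * T))).le h4]
      calc R * Ztil μ L (P / c)
          = (Kker A (P / L) c / Kker A (P / L) 1) * Ztil μ L (P / c) := by
            rw [hKratio (P / L) hs]
        _ = (Kker A (P / L) c * Ztil μ L (P / c)) / Kker A (P / L) 1 := by ring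
        _ ≤ (v (P / L) * v c + Real.exp (-((c - 1) * T)) * (Kker A (P / L) 1 * Ztil μ L P)) /
              Kker A (P / L) 1 := by gcongr
        _ = (v (P / L) * v c) / Kker A (P / L) 1 + Real.exp (-((c - 1) * T)) * Ztil μ L P := by
            field_simp
    -- limits
    have hlhs : Tendsto (fun L => R * Ztil μ L (P / c)) atTop (nhds (R * v (P / c))) :=
      (hZlim (P / c) (div_pos hP hc)).const_mul R
    have hv0 : Tendsto (fun L : ℝ => v (P / L)) atTop (nhds 0) := by
      have hd : Tendsto (fun L : ℝ => P / L) atTop (nhds 0) :=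
        tendsto_const_nhds.div_atTop tendsto_id
      have hcont : Continuous v := by
        rw [hvdef]; exact continuous_const.sub (Real.continuous_exp.comp continuous_neg)
      have := (hcont.tendsto 0).comp hd
      simpa [hvdef, Function.comp_def] using this
    have hterm0 : Tendsto (fun L : ℝ => (v (P / L) * v c) / Kker A (P / L) 1)
        atTop (nhds 0) := by
      have hg : Tendsto (fun L : ℝ => v (P / L) / K₀) atTop (nhds 0) := by
        have := hv0.div_const K₀
        simpa using this
      refine squeeze_zero' ?_ ?_ hg
      · filter_upwards [eventually_gt_atTop 0] with L hL
        have hs : 0 < P / L := div_pos hP hL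
        exact div_nonneg (mul_nonneg (hvnn _ hs.le) (hvnn c hc.le)) (hKpos _ 1 hs one_pos).le
      · filter_upwards [eventually_ge_atTop (max P 1)] with L hL
        have hL1 : (1:ℝ) ≤ L := le_trans (le_max_right _ _) hL
        have hLP : P ≤ L := le_trans (le_max_left _ _) hL
        have hL0 : 0 < L := lt_of_lt_of_le one_pos hL1
        have hs : 0 < P / L := div_pos hP hL0
        have hs1 : P / L ≤ 1 := (div_le_one hL0).2 hLP
        have hnum : v (P / L) * v c ≤ v (P / L) := by
          nlinarith [mul_nonneg (hvnn _ hs.le) (sub_nonneg.2 (hvle1 c))]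
        exact div_le_div₀ (hvnn _ hs.le) hnum hK₀pos (hKlb _ hs hs1)
    have hrhs : Tendsto (fun L : ℝ =>
        (v (P / L) * v c) / Kker A (P / L) 1 + Real.exp (-((c - 1) * T)) * Ztil μ L P)
        atTop (nhds (0 + Real.exp (-((c - 1) * T)) * v P)) :=
      hterm0.add ((hZlim P hP).const_mul _)
    have hfin := le_of_tendsto_of_tendsto hlhs hrhs hev
    simpa using hfin
  have key' : ∀ c : ℝ, 1 ≤ c →
      Real.exp (P * A / c - A * c - P * A + A) / Real.sqrt c * (1 - Real.exp (-(P / c))) ≤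
        Real.exp (-((c - 1) * T)) * (1 - Real.exp (-P)) := by
    intro c hc1
    have h := key c hc1
    simpa only [hvdef] using h
  exact aux_contra A T P hA hT hP key'
end

section
/- Under the modular setup below, for every ε > 0 and every Λ > 0 one has μ( { (h, h̄) : |h − A| < ε and h̄ > Λ } ) > 0, and likewise μ( { (h, h̄) : h > Λ and |h̄ − A| < ε } ) > 0. (In CFT language: there is a family of Virasoro primaries with h → (c−1)/24 and h̄ → ∞, and vice versa.) -/
open MeasureTheory

open Real Filter

/-- The spectral integral part of `Ztil`. -/
noncomputable def Ifun (μ : Measure (ℝ × ℝ)) (β βb : ℝ) : ℝ :=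
  ∫ p : ℝ × ℝ, Real.exp (-β * p.1 - βb * p.2) ∂μ

/-- The `β`-dependent factor of the crossing kernel. -/
noncomputable def gfun (A β : ℝ) : ℝ :=
  2 * Real.pi / Real.sqrt β * Real.exp (4 * Real.pi ^ 2 * A / β - A * β)

/-- The `β̄`-dependent factor of the crossing kernel. -/
noncomputable def Ffun (A βb : ℝ) : ℝ :=
  (1 / Real.sqrt βb) * Real.exp (4 * Real.pi ^ 2 * A / βb - A * βb)

lemma Ztil_eq (μ : Measure (ℝ × ℝ)) (β βb : ℝ) :
    Ztil μ β βb = (1 - Real.exp (-β)) * (1 - Real.exp (-βb)) + Ifun μ β βb := rfl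

lemma gfun_pos {A β : ℝ} (hβ : 0 < β) : 0 < gfun A β :=
  mul_pos (div_pos (by positivity) (Real.sqrt_pos.2 hβ)) (Real.exp_pos _)

lemma Ffun_pos {A βb : ℝ} (hβb : 0 < βb) : 0 < Ffun A βb :=
  mul_pos (div_pos one_pos (Real.sqrt_pos.2 hβb)) (Real.exp_pos _)

lemma Kker_factor {A β βb : ℝ} (hβ : 0 < β) (hβb : 0 < βb) :
    Kker A β βb = gfun A β * Ffun A βb := by
  have h1 : (0:ℝ) < Real.sqrt β := Real.sqrt_pos.2 hβ
  have h2 : (0:ℝ) < Real.sqrt βb := Real.sqrt_pos.2 hβb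
  rw [Kker, gfun, Ffun, Real.sqrt_mul hβ.le,
    show 4 * Real.pi ^ 2 * A / β + 4 * Real.pi ^ 2 * A / βb - A * β - A * βb
      = (4 * Real.pi ^ 2 * A / β - A * β) + (4 * Real.pi ^ 2 * A / βb - A * βb) by ring,
    Real.exp_add]
  field_simp

lemma Kker_symm (A β βb : ℝ) : Kker A β βb = Kker A βb β := by
  rw [Kker, Kker, mul_comm βb β,
    show 4 * Real.pi ^ 2 * A / βb + 4 * Real.pi ^ 2 * A / β - A * βb - A * β
      = 4 * Real.pi ^ 2 * A / β + 4 * Real.pi ^ 2 * A / βb - A * β - A * βb by ring]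

lemma Ifun_nonneg (μ : Measure (ℝ × ℝ)) (β βb : ℝ) : 0 ≤ Ifun μ β βb :=
  integral_nonneg fun _ => (Real.exp_pos _).le

lemma ae_supp {T : ℝ} {μ : Measure (ℝ × ℝ)}
    (hsupp : μ {p : ℝ × ℝ | p.1 < T ∨ p.2 < T} = 0) :
    ∀ᵐ p ∂μ, T ≤ p.1 ∧ T ≤ p.2 := by
  rw [ae_iff]
  have : {p : ℝ × ℝ | ¬(T ≤ p.1 ∧ T ≤ p.2)} = {p : ℝ × ℝ | p.1 < T ∨ p.2 < T} := by
    ext p; simp only [Set.mem_setOf_eq, not_and_or, not_le]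
  rw [this]; exact hsupp

lemma Ifun_decay {T : ℝ} (hT : 0 < T) {μ : Measure (ℝ × ℝ)}
    (hsupp : μ {p : ℝ × ℝ | p.1 < T ∨ p.2 < T} = 0)
    (hint : ∀ β βb : ℝ, 0 < β → 0 < βb →
      Integrable (fun p : ℝ × ℝ => Real.exp (-β * p.1 - βb * p.2)) μ)
    {β B : ℝ} (hβ : 0 < β) (hB : 1 ≤ B) :
    Ifun μ β B ≤ Real.exp (-(B - 1) * T) * Ifun μ β 1 := by
  have hi1 : Integrable (fun p : ℝ × ℝ => Real.exp (-β * p.1 - 1 * p.2)) μ :=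
    hint β 1 hβ one_pos
  calc Ifun μ β B
      ≤ ∫ p : ℝ × ℝ, Real.exp (-(B - 1) * T) * Real.exp (-β * p.1 - 1 * p.2) ∂μ := by
        refine integral_mono_ae (hint β B hβ (by linarith)) (hi1.const_mul _) ?_
        filter_upwards [ae_supp hsupp] with p hp
        rw [← Real.exp_add]
        apply Real.exp_le_exp.2
        nlinarith [hp.2, mul_le_mul_of_nonneg_left hp.2 (by linarith : (0:ℝ) ≤ B - 1)]
    _ = Real.exp (-(B - 1) * T) * Ifun μ β 1 := integral_const_mul _ _

lemma exp_neg_one_lt_half : Real.exp (-1) < 1/2 := by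
  have h1 : Real.exp (-1) * Real.exp 1 = 1 := by
    rw [← Real.exp_add]; norm_num
  nlinarith [Real.exp_one_gt_d9, Real.exp_pos (-1)]

lemma four_pi_sq_ge_one : (1:ℝ) ≤ 4 * Real.pi ^ 2 := by
  nlinarith [Real.pi_gt_three]

lemma vac_nonneg {β βb : ℝ} (hβ : 0 < β) (hβb : 0 < βb) :
    0 ≤ (1 - Real.exp (-β)) * (1 - Real.exp (-βb)) := by
  have h1 : Real.exp (-β) ≤ 1 := Real.exp_le_one_iff.2 (by linarith)
  have h2 : Real.exp (-βb) ≤ 1 := Real.exp_le_one_iff.2 (by linarith)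
  nlinarith

lemma vac_le_one {β βb : ℝ} (hβ : 0 < β) (hβb : 0 < βb) :
    (1 - Real.exp (-β)) * (1 - Real.exp (-βb)) ≤ 1 := by
  have h1 : Real.exp (-β) ≤ 1 := Real.exp_le_one_iff.2 (by linarith)
  have h2 : Real.exp (-βb) ≤ 1 := Real.exp_le_one_iff.2 (by linarith)
  have h3 := Real.exp_pos (-β)
  have h4 := Real.exp_pos (-βb)
  nlinarith

/-- Lower bound for the spectral integral from modular invariance, `βb ≤ 1`. -/
lemma Ifun_lower {A : ℝ} {μ : Measure (ℝ × ℝ)}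
    (hmod : ∀ β βb : ℝ, 0 < β → 0 < βb →
      Ztil μ β βb = Kker A β βb * Ztil μ (4 * Real.pi ^ 2 / β) (4 * Real.pi ^ 2 / βb))
    {β βb : ℝ} (hβ : 0 < β) (hβb : 0 < βb) (hβb1 : βb ≤ 1) :
    gfun A β * Ffun A βb * ((1 - Real.exp (-(4 * Real.pi ^ 2 / β))) / 2) - 1
      ≤ Ifun μ β βb := by
  have hπ := four_pi_sq_ge_one
  have hβ2 : (0:ℝ) < 4 * Real.pi ^ 2 / β := by positivity
  have hβb2 : (0:ℝ) < 4 * Real.pi ^ 2 / βb := by positivity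
  have h0 := hmod β βb hβ hβb
  rw [Ztil_eq, Ztil_eq] at h0
  -- `Ifun μ β βb = Kker * Z* - V`
  have hK : 0 < Kker A β βb := by
    rw [Kker_factor hβ hβb]; exact mul_pos (gfun_pos hβ) (Ffun_pos hβb)
  -- Z* ≥ (1 - e^{-4π²/β}) / 2
  have hhalf : (1:ℝ)/2 ≤ 1 - Real.exp (-(4 * Real.pi ^ 2 / βb)) := by
    have h1 : 4 * Real.pi ^ 2 ≤ 4 * Real.pi ^ 2 / βb := by
      rw [le_div_iff₀ hβb]; nlinarith
    have h2 : Real.exp (-(4 * Real.pi ^ 2 / βb)) ≤ Real.exp (-1) :=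
      Real.exp_le_exp.2 (by linarith)
    linarith [_root_.exp_neg_one_lt_half]
  have he1 : 0 ≤ 1 - Real.exp (-(4 * Real.pi ^ 2 / β)) := by
    have : Real.exp (-(4 * Real.pi ^ 2 / β)) ≤ 1 := Real.exp_le_one_iff.2 (by linarith)
    linarith
  have hZstar : (1 - Real.exp (-(4 * Real.pi ^ 2 / β))) / 2
      ≤ (1 - Real.exp (-(4 * Real.pi ^ 2 / β))) * (1 - Real.exp (-(4 * Real.pi ^ 2 / βb)))
        + Ifun μ (4 * Real.pi ^ 2 / β) (4 * Real.pi ^ 2 / βb) := by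
    have := Ifun_nonneg μ (4 * Real.pi ^ 2 / β) (4 * Real.pi ^ 2 / βb)
    nlinarith
  have hVle := vac_le_one hβ hβb
  have hKZ := mul_le_mul_of_nonneg_left hZstar hK.le
  rw [← Kker_factor hβ hβb]
  nlinarith [hKZ, h0]

/-- Upper bound for the spectral integral from modular invariance, `βb ≤ 1`. -/
lemma Ifun_upper {A T : ℝ} (hT : 0 < T) {μ : Measure (ℝ × ℝ)}
    (hsupp : μ {p : ℝ × ℝ | p.1 < T ∨ p.2 < T} = 0)
    (hint : ∀ β βb : ℝ, 0 < β → 0 < βb →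
      Integrable (fun p : ℝ × ℝ => Real.exp (-β * p.1 - βb * p.2)) μ)
    (hmod : ∀ β βb : ℝ, 0 < β → 0 < βb →
      Ztil μ β βb = Kker A β βb * Ztil μ (4 * Real.pi ^ 2 / β) (4 * Real.pi ^ 2 / βb))
    {β βb : ℝ} (hβ : 0 < β) (hβb : 0 < βb) (hβb1 : βb ≤ 1) :
    Ifun μ β βb ≤ gfun A β * Ffun A βb *
      (1 + Real.exp (-(4 * Real.pi ^ 2 / βb - 1) * T) * Ifun μ (4 * Real.pi ^ 2 / β) 1) := by
  have hπ := four_pi_sq_ge_one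
  have hβ2 : (0:ℝ) < 4 * Real.pi ^ 2 / β := by positivity
  have hβb2 : (1:ℝ) ≤ 4 * Real.pi ^ 2 / βb := by
    rw [le_div_iff₀ hβb]; nlinarith
  have h0 := hmod β βb hβ hβb
  rw [Ztil_eq, Ztil_eq] at h0
  have hK : 0 < Kker A β βb := by
    rw [Kker_factor hβ hβb]; exact mul_pos (gfun_pos hβ) (Ffun_pos hβb)
  have hdec := Ifun_decay hT hsupp hint hβ2 hβb2
  have hZstar : (1 - Real.exp (-(4 * Real.pi ^ 2 / β))) * (1 - Real.exp (-(4 * Real.pi ^ 2 / βb)))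
        + Ifun μ (4 * Real.pi ^ 2 / β) (4 * Real.pi ^ 2 / βb)
      ≤ 1 + Real.exp (-(4 * Real.pi ^ 2 / βb - 1) * T) * Ifun μ (4 * Real.pi ^ 2 / β) 1 := by
    have := vac_le_one hβ2 (by linarith : (0:ℝ) < 4 * Real.pi ^ 2 / βb)
    linarith
  have hKZ := mul_le_mul_of_nonneg_left hZstar hK.le
  have hvac := vac_nonneg hβ hβb
  rw [← Kker_factor hβ hβb]
  nlinarith [hKZ, h0]

/-- If the strip `{|h - A| < ε, h̄ > Λ}` carries no mass, the spectral integral splits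
into light, band, and heavy contributions. -/
lemma Ifun_split {A T ε Λ : ℝ} (hT : 0 < T) {μ : Measure (ℝ × ℝ)}
    (hsupp : μ {p : ℝ × ℝ | p.1 < T ∨ p.2 < T} = 0)
    (hint : ∀ β βb : ℝ, 0 < β → 0 < βb →
      Integrable (fun p : ℝ × ℝ => Real.exp (-β * p.1 - βb * p.2)) μ)
    (hS : μ {p : ℝ × ℝ | |p.1 - A| < ε ∧ Λ < p.2} = 0)
    {β β' βb : ℝ} (hβ1 : 1 ≤ β) (hββ' : β ≤ β') (hβb : 0 < βb) :
    Ifun μ β βb ≤ Real.exp ((β' - β) * (A - ε)) * Ifun μ β' βb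
      + Real.exp Λ * Ifun μ 1 1 + Real.exp (-(β - 1) * (A + ε)) * Ifun μ 1 βb := by
  have hβ : (0:ℝ) < β := by linarith
  have hβ' : (0:ℝ) < β' := by linarith
  have hi1 : Integrable (fun p : ℝ × ℝ => Real.exp (-β' * p.1 - βb * p.2)) μ :=
    hint β' βb hβ' hβb
  have hi2 : Integrable (fun p : ℝ × ℝ => Real.exp (-1 * p.1 - 1 * p.2)) μ :=
    hint 1 1 one_pos one_pos
  have hi3 : Integrable (fun p : ℝ × ℝ => Real.exp (-1 * p.1 - βb * p.2)) μ :=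
    hint 1 βb one_pos hβb
  have haeS : ∀ᵐ p ∂μ, ¬(|p.1 - A| < ε ∧ Λ < p.2) := by
    rw [ae_iff]
    have : {p : ℝ × ℝ | ¬¬(|p.1 - A| < ε ∧ Λ < p.2)} = {p : ℝ × ℝ | |p.1 - A| < ε ∧ Λ < p.2} := by
      ext p; simp
    rw [this]; exact hS
  calc Ifun μ β βb
      ≤ ∫ p : ℝ × ℝ, (Real.exp ((β' - β) * (A - ε)) * Real.exp (-β' * p.1 - βb * p.2)
          + Real.exp Λ * Real.exp (-1 * p.1 - 1 * p.2)
          + Real.exp (-(β - 1) * (A + ε)) * Real.exp (-1 * p.1 - βb * p.2)) ∂μ := by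
        refine integral_mono_ae (hint β βb hβ hβb)
          (((hi1.const_mul _).add (hi2.const_mul _)).add (hi3.const_mul _)) ?_
        filter_upwards [ae_supp hsupp, haeS] with p hp hps
        have hp1 : 0 < p.1 := lt_of_lt_of_le hT hp.1
        have hp2 : 0 < p.2 := lt_of_lt_of_le hT hp.2
        have e1 : (0:ℝ) ≤ Real.exp ((β' - β) * (A - ε)) * Real.exp (-β' * p.1 - βb * p.2) := by
          positivity
        have e2 : (0:ℝ) ≤ Real.exp Λ * Real.exp (-1 * p.1 - 1 * p.2) := by positivity
        have e3 : (0:ℝ) ≤ Real.exp (-(β - 1) * (A + ε)) * Real.exp (-1 * p.1 - βb * p.2) := by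
          positivity
        rcases le_or_gt p.1 (A - ε) with hc | hc
        · -- light
          have : Real.exp (-β * p.1 - βb * p.2)
              ≤ Real.exp ((β' - β) * (A - ε)) * Real.exp (-β' * p.1 - βb * p.2) := by
            rw [← Real.exp_add]
            apply Real.exp_le_exp.2
            nlinarith [mul_le_mul_of_nonneg_left hc (by linarith : (0:ℝ) ≤ β' - β)]
          linarith
        · rcases lt_or_ge p.1 (A + ε) with hd | hd
          · -- band: h̄ ≤ Λ forced
            have habs : |p.1 - A| < ε := abs_lt.2 ⟨by linarith, by linarith⟩
            have hΛ2 : p.2 ≤ Λ := not_lt.1 fun hh => hps ⟨habs, hh⟩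
            have : Real.exp (-β * p.1 - βb * p.2) ≤ Real.exp Λ * Real.exp (-1 * p.1 - 1 * p.2) := by
              rw [← Real.exp_add]
              apply Real.exp_le_exp.2
              nlinarith [mul_nonneg (by linarith : (0:ℝ) ≤ β - 1) hp1.le,
                mul_nonneg hβb.le hp2.le]
            linarith
          · -- heavy
            have : Real.exp (-β * p.1 - βb * p.2)
                ≤ Real.exp (-(β - 1) * (A + ε)) * Real.exp (-1 * p.1 - βb * p.2) := by
              rw [← Real.exp_add]
              apply Real.exp_le_exp.2
              nlinarith [mul_le_mul_of_nonneg_left hd (by linarith : (0:ℝ) ≤ β - 1)]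
            linarith
    _ = Real.exp ((β' - β) * (A - ε)) * Ifun μ β' βb
          + Real.exp Λ * Ifun μ 1 1 + Real.exp (-(β - 1) * (A + ε)) * Ifun μ 1 βb := by
        rw [Ifun, Ifun, Ifun, ← integral_const_mul, ← integral_const_mul, ← integral_const_mul,
          ← integral_add (hi1.const_mul _) (hi2.const_mul _),
          ← integral_add (f := fun p : ℝ × ℝ =>
              Real.exp ((β' - β) * (A - ε)) * Real.exp (-β' * p.1 - βb * p.2)
                + Real.exp Λ * Real.exp (-1 * p.1 - 1 * p.2))
            ((hi1.const_mul _).add (hi2.const_mul _)) (hi3.const_mul _)]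

set_option maxHeartbeats 2000000 in
/-- Main quantitative lemma: positivity of the mass of the strip, for `ε < A`. -/
theorem stmt15_main (A T : ℝ) (hA : 0 < A) (hT : 0 < T) (μ : Measure (ℝ × ℝ))
    (hsupp : μ {p : ℝ × ℝ | p.1 < T ∨ p.2 < T} = 0)
    (hint : ∀ β βb : ℝ, 0 < β → 0 < βb →
      Integrable (fun p : ℝ × ℝ => Real.exp (-β * p.1 - βb * p.2)) μ)
    (hmod : ∀ β βb : ℝ, 0 < β → 0 < βb →
      Ztil μ β βb = Kker A β βb * Ztil μ (4 * Real.pi ^ 2 / β) (4 * Real.pi ^ 2 / βb))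
    (ε : ℝ) (hε : 0 < ε) (hεA : ε < A) (Λ : ℝ) :
    0 < μ {p : ℝ × ℝ | |p.1 - A| < ε ∧ Λ < p.2} := by
  by_contra hcon
  have hS : μ {p : ℝ × ℝ | |p.1 - A| < ε ∧ Λ < p.2} = 0 := le_zero_iff.1 (not_lt.1 hcon)
  have hπ := four_pi_sq_ge_one
  have hπpos := Real.pi_pos
  have hg1 : 0 < gfun A 1 := gfun_pos one_pos
  -- Step 1 : choose β large
  have hlim1 : Tendsto (fun x : ℝ => x ^ 2 * Real.exp (-(ε * x))) atTop (nhds 0) := by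
    have h2 : Tendsto (fun x : ℝ => ε * x) atTop atTop :=
      Tendsto.const_mul_atTop hε tendsto_id
    have h3 := ((tendsto_pow_mul_exp_neg_atTop_nhds_zero 2).comp h2).const_mul ((ε ^ 2)⁻¹)
    rw [mul_zero] at h3
    refine h3.congr fun x => ?_
    have hεne : ε ≠ 0 := ne_of_gt hε
    simp only [Function.comp_apply]
    field_simp
  have hCpos : (0:ℝ) < 2 * gfun A 1 * Real.exp (A + ε) :=
    mul_pos (mul_pos two_pos hg1) (Real.exp_pos _)
  obtain ⟨δ, hδdef⟩ : ∃ δ : ℝ, δ = Real.pi ^ 3 / (2 * gfun A 1 * Real.exp (A + ε)) := ⟨_, rfl⟩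
  have hδ : 0 < δ := by rw [hδdef]; exact div_pos (by positivity) hCpos
  obtain ⟨β, hβδ, hβmax⟩ := ((hlim1.eventually_lt_const hδ).and
    (eventually_ge_atTop (max 1 (4 * Real.pi ^ 2)))).exists
  have hβ1 : (1:ℝ) ≤ β := le_trans (le_max_left _ _) hβmax
  have hβ4 : 4 * Real.pi ^ 2 ≤ β := le_trans (le_max_right _ _) hβmax
  have hβpos : (0:ℝ) < β := by linarith
  -- positivity of the "gap" γ0 at β
  have hu : 0 < gfun A β * ((1 - Real.exp (-(4 * Real.pi ^ 2 / β))) / 2)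
      - 2 * Real.exp (-(β - 1) * (A + ε)) * gfun A 1 := by
    -- (a) lower bound on the vacuum factor
    have hx : (0:ℝ) < 4 * Real.pi ^ 2 / β := by positivity
    have hx1 : 4 * Real.pi ^ 2 / β ≤ 1 := by rw [div_le_one hβpos]; linarith
    have hinv : ((1:ℝ) + 4 * Real.pi ^ 2 / β)⁻¹ * (1 + 4 * Real.pi ^ 2 / β) = 1 :=
      inv_mul_cancel₀ (by linarith)
    have hexp : Real.exp (-(4 * Real.pi ^ 2 / β)) ≤ (1 + 4 * Real.pi ^ 2 / β)⁻¹ := by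
      rw [Real.exp_neg]
      exact inv_anti₀ (by linarith)
        (by linarith [Real.add_one_le_exp (4 * Real.pi ^ 2 / β)])
    have hipos : (0:ℝ) < (1 + 4 * Real.pi ^ 2 / β)⁻¹ := by positivity
    have hi2 : (1:ℝ)/2 ≤ (1 + 4 * Real.pi ^ 2 / β)⁻¹ := by
      nlinarith [hinv, hipos, mul_nonneg hipos.le (by linarith : (0:ℝ) ≤ 1 - 4 * Real.pi ^ 2 / β)]
    have hQ : Real.pi ^ 2 / β ≤ (1 - Real.exp (-(4 * Real.pi ^ 2 / β))) / 2 := by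
      have h4 : Real.pi ^ 2 / β = (4 * Real.pi ^ 2 / β) / 4 := by ring
      rw [h4]
      generalize 4 * Real.pi ^ 2 / β = x at hx hx1 hinv hexp hi2 ⊢
      nlinarith [mul_le_mul_of_nonneg_right hi2 hx.le, hexp, hinv]
    -- (b) lower bound on gfun A β
    have hsq : Real.sqrt β ≤ β := by
      nlinarith [Real.sq_sqrt hβpos.le, Real.sqrt_nonneg β, sq_nonneg (Real.sqrt β - 1)]
    have hsqpos : 0 < Real.sqrt β := Real.sqrt_pos.2 hβpos
    have hdivle : 2 * Real.pi / β ≤ 2 * Real.pi / Real.sqrt β := by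
      apply div_le_div_of_nonneg_left (by positivity) hsqpos hsq
    have hexple : Real.exp (-(A * β)) ≤ Real.exp (4 * Real.pi ^ 2 * A / β - A * β) :=
      Real.exp_le_exp.2 (by
        have h9 : (0:ℝ) ≤ 4 * Real.pi ^ 2 * A / β := by positivity
        linarith)
    have hgl : 2 * Real.pi / β * Real.exp (-(A * β)) ≤ gfun A β := by
      rw [gfun]
      exact mul_le_mul hdivle hexple (Real.exp_pos _).le (by positivity)
    have hgQ : (2 * Real.pi / β * Real.exp (-(A * β))) * (Real.pi ^ 2 / β)
        ≤ gfun A β * ((1 - Real.exp (-(4 * Real.pi ^ 2 / β))) / 2) :=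
      mul_le_mul hgl hQ (by positivity) (gfun_pos hβpos).le
    have hgQ2 : 2 * (Real.pi ^ 3 / β ^ 2 * Real.exp (-(A * β)))
        ≤ gfun A β * ((1 - Real.exp (-(4 * Real.pi ^ 2 / β))) / 2) := by
      refine le_trans (le_of_eq ?_) hgQ
      field_simp
    -- (c) upper bound on the subtracted term
    have hterm2eq : 2 * Real.exp (-(β - 1) * (A + ε)) * gfun A 1
        = (2 * gfun A 1 * Real.exp (A + ε)) * (Real.exp (-(ε * β)) * Real.exp (-(A * β))) := by
      rw [show -(β - 1) * (A + ε) = (A + ε) + -(ε * β) + -(A * β) by ring,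
        Real.exp_add, Real.exp_add]
      ring
    have hCne : (2 * gfun A 1 * Real.exp (A + ε)) ≠ 0 := ne_of_gt hCpos
    have hCδ : (2 * gfun A 1 * Real.exp (A + ε)) * δ = Real.pi ^ 3 := by
      rw [hδdef]; field_simp
    have h1 : Real.exp (-(ε * β)) < δ / β ^ 2 := by
      rw [lt_div_iff₀ (by positivity)]
      nlinarith [hβδ]
    have hterm2lt : 2 * Real.exp (-(β - 1) * (A + ε)) * gfun A 1
        < Real.pi ^ 3 / β ^ 2 * Real.exp (-(A * β)) := by
      rw [hterm2eq]
      have h2 : (2 * gfun A 1 * Real.exp (A + ε)) * (Real.exp (-(ε * β)) * Real.exp (-(A * β)))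
          < (2 * gfun A 1 * Real.exp (A + ε)) * ((δ / β ^ 2) * Real.exp (-(A * β))) := by
        apply mul_lt_mul_of_pos_left _ hCpos
        exact mul_lt_mul_of_pos_right h1 (Real.exp_pos _)
      refine lt_of_lt_of_le h2 (le_of_eq ?_)
      rw [hδdef]
      field_simp
    have hXpos : (0:ℝ) < Real.pi ^ 3 / β ^ 2 * Real.exp (-(A * β)) := by positivity
    linarith [hterm2lt, hgQ2, hXpos]
  -- Step 2 : choose β' ≥ β with small light-term coefficient
  have hlim2 : Tendsto (fun β' : ℝ => (4 * Real.pi * Real.exp (4 * Real.pi ^ 2 * A) *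
      Real.exp (-((A - ε) * β))) * Real.exp (-(ε * β'))) atTop (nhds 0) := by
    have h2 : Tendsto (fun x : ℝ => ε * x) atTop atTop := Tendsto.const_mul_atTop hε tendsto_id
    have h3 : Tendsto (fun x : ℝ => -(ε * x)) atTop atBot := tendsto_neg_atTop_atBot.comp h2
    have h4 : Tendsto (fun x : ℝ => Real.exp (-(ε * x))) atTop (nhds 0) :=
      Real.tendsto_exp_atBot.comp h3
    have h5 := h4.const_mul (4 * Real.pi * Real.exp (4 * Real.pi ^ 2 * A) *
      Real.exp (-((A - ε) * β)))
    rwa [mul_zero] at h5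
  obtain ⟨β', hβ'small, hβ'ge⟩ :=
    ((hlim2.eventually_lt_const hu).and (eventually_ge_atTop β)).exists
  have hβ'1 : (1:ℝ) ≤ β' := le_trans hβ1 hβ'ge
  have hβ'pos : (0:ℝ) < β' := by linarith
  have hterm1 : 2 * Real.exp ((β' - β) * (A - ε)) * gfun A β'
      < gfun A β * ((1 - Real.exp (-(4 * Real.pi ^ 2 / β))) / 2)
        - 2 * Real.exp (-(β - 1) * (A + ε)) * gfun A 1 := by
    have hs1 : (1:ℝ) ≤ Real.sqrt β' := (Real.le_sqrt' one_pos).2 (by nlinarith)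
    have hd1 : 2 * Real.pi / Real.sqrt β' ≤ 2 * Real.pi := by
      rw [div_le_iff₀ (by linarith)]
      nlinarith [Real.pi_pos]
    have hd2 : Real.exp (4 * Real.pi ^ 2 * A / β' - A * β')
        ≤ Real.exp (4 * Real.pi ^ 2 * A) * Real.exp (-(A * β')) := by
      rw [← Real.exp_add]
      apply Real.exp_le_exp.2
      have h9 := div_le_self (by positivity : (0:ℝ) ≤ 4 * Real.pi ^ 2 * A) hβ'1
      linarith
    have hgub : gfun A β'
        ≤ 2 * Real.pi * (Real.exp (4 * Real.pi ^ 2 * A) * Real.exp (-(A * β'))) := by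
      rw [gfun]
      exact mul_le_mul hd1 hd2 (Real.exp_pos _).le (by positivity)
    have hcomb : Real.exp ((β' - β) * (A - ε)) * Real.exp (-(A * β'))
        = Real.exp (-((A - ε) * β)) * Real.exp (-(ε * β')) := by
      rw [← Real.exp_add, ← Real.exp_add]
      congr 1
      ring
    calc 2 * Real.exp ((β' - β) * (A - ε)) * gfun A β'
        ≤ 2 * Real.exp ((β' - β) * (A - ε)) *
            (2 * Real.pi * (Real.exp (4 * Real.pi ^ 2 * A) * Real.exp (-(A * β')))) := by
          apply mul_le_mul_of_nonneg_left hgub (by positivity)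
      _ = (4 * Real.pi * Real.exp (4 * Real.pi ^ 2 * A) * Real.exp (-((A - ε) * β)))
            * Real.exp (-(ε * β')) := by
          rw [show 2 * Real.exp ((β' - β) * (A - ε)) *
              (2 * Real.pi * (Real.exp (4 * Real.pi ^ 2 * A) * Real.exp (-(A * β'))))
            = 4 * Real.pi * Real.exp (4 * Real.pi ^ 2 * A) *
              (Real.exp ((β' - β) * (A - ε)) * Real.exp (-(A * β'))) by ring, hcomb]
          ring
      _ < _ := hβ'small
  have hγ : (0:ℝ) < gfun A β * ((1 - Real.exp (-(4 * Real.pi ^ 2 / β))) / 2)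
      - 2 * Real.exp (-(β - 1) * (A + ε)) * gfun A 1
      - 2 * Real.exp ((β' - β) * (A - ε)) * gfun A β' := by linarith
  obtain ⟨γ, hγdef⟩ : ∃ γ : ℝ, γ = gfun A β * ((1 - Real.exp (-(4 * Real.pi ^ 2 / β))) / 2)
      - 2 * Real.exp (-(β - 1) * (A + ε)) * gfun A 1
      - 2 * Real.exp ((β' - β) * (A - ε)) * gfun A β' := ⟨_, rfl⟩
  rw [← hγdef] at hγ
  obtain ⟨M, hMdef⟩ : ∃ M : ℝ, M = 1 + Real.exp Λ * Ifun μ 1 1 := ⟨_, rfl⟩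
  -- Step 3 : choose βb = x⁻¹ small
  have hJ'0 : 0 ≤ Ifun μ (4 * Real.pi ^ 2 / β') 1 := Ifun_nonneg μ _ _
  have hJ10 : 0 ≤ Ifun μ (4 * Real.pi ^ 2 / 1) 1 := Ifun_nonneg μ _ _
  have hevA : ∀ᶠ x : ℝ in atTop, Real.exp (-(4 * Real.pi ^ 2 * x - 1) * T) *
      (1 + Ifun μ (4 * Real.pi ^ 2 / β') 1 + Ifun μ (4 * Real.pi ^ 2 / 1) 1) < 1 := by
    have hbase : Tendsto (fun x : ℝ => 4 * Real.pi ^ 2 * T * x) atTop atTop :=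
      Tendsto.const_mul_atTop (by positivity) tendsto_id
    have hlin : Tendsto (fun x : ℝ => -(4 * Real.pi ^ 2 * x - 1) * T) atTop atBot := by
      have h6 := tendsto_atBot_add_const_right atTop T (tendsto_neg_atTop_atBot.comp hbase)
      exact h6.congr fun x => by simp only [Function.comp_apply]; ring
    have hexp0 := Real.tendsto_exp_atBot.comp hlin
    have h7 := hexp0.mul_const
      (1 + Ifun μ (4 * Real.pi ^ 2 / β') 1 + Ifun μ (4 * Real.pi ^ 2 / 1) 1)
    rw [zero_mul] at h7
    exact h7.eventually_lt_const one_pos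
  have hevB : ∀ᶠ x : ℝ in atTop, M / γ < Real.exp (4 * Real.pi ^ 2 * A * x - A) := by
    have hbase2 : Tendsto (fun x : ℝ => 4 * Real.pi ^ 2 * A * x) atTop atTop :=
      Tendsto.const_mul_atTop (by positivity) tendsto_id
    have hlin2 : Tendsto (fun x : ℝ => 4 * Real.pi ^ 2 * A * x - A) atTop atTop := by
      have h6 := tendsto_atTop_add_const_right atTop (-A) hbase2
      exact h6.congr fun x => by ring
    exact (Real.tendsto_exp_atTop.comp hlin2).eventually_gt_atTop (M / γ)
  obtain ⟨x, ⟨hxA, hxB⟩, hx1⟩ := ((hevA.and hevB).and (eventually_ge_atTop (1:ℝ))).exists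
  have hxpos : (0:ℝ) < x := lt_of_lt_of_le one_pos hx1
  have hβbpos : (0:ℝ) < x⁻¹ := inv_pos.2 hxpos
  have hβb1 : x⁻¹ ≤ (1:ℝ) := by
    rw [← one_div]
    exact div_le_one_of_le₀ hx1 hxpos.le
  have h4x : 4 * Real.pi ^ 2 / x⁻¹ = 4 * Real.pi ^ 2 * x := by field_simp
  have hlow := Ifun_lower hmod hβpos hβbpos hβb1
  have hup1 := Ifun_upper hT hsupp hint hmod hβ'pos hβbpos hβb1
  have hup2 := Ifun_upper hT hsupp hint hmod one_pos hβbpos hβb1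
  rw [h4x] at hup1 hup2
  have hE : (0:ℝ) < Real.exp (-(4 * Real.pi ^ 2 * x - 1) * T) := Real.exp_pos _
  have hEJ' : Real.exp (-(4 * Real.pi ^ 2 * x - 1) * T) * Ifun μ (4 * Real.pi ^ 2 / β') 1
      ≤ 1 := by nlinarith [hxA, hE, hJ'0, hJ10]
  have hEJ1 : Real.exp (-(4 * Real.pi ^ 2 * x - 1) * T) * Ifun μ (4 * Real.pi ^ 2 / 1) 1
      ≤ 1 := by nlinarith [hxA, hE, hJ'0, hJ10]
  have hgF1 : (0:ℝ) ≤ gfun A β' * Ffun A x⁻¹ :=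
    (mul_pos (gfun_pos hβ'pos) (Ffun_pos hβbpos)).le
  have hgF2 : (0:ℝ) ≤ gfun A 1 * Ffun A x⁻¹ :=
    (mul_pos (gfun_pos one_pos) (Ffun_pos hβbpos)).le
  have hup1' : Ifun μ β' x⁻¹ ≤ gfun A β' * Ffun A x⁻¹ * 2 := by
    refine le_trans hup1 ?_
    nlinarith [hgF1, hEJ']
  have hup2' : Ifun μ 1 x⁻¹ ≤ gfun A 1 * Ffun A x⁻¹ * 2 := by
    refine le_trans hup2 ?_
    nlinarith [hgF2, hEJ1]
  have hsplit := Ifun_split hT hsupp hint hS hβ1 hβ'ge hβbpos (β' := β')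
  have hcomb1 := mul_le_mul_of_nonneg_left hup1' (Real.exp_pos ((β' - β) * (A - ε))).le
  have hcomb2 := mul_le_mul_of_nonneg_left hup2' (Real.exp_pos (-(β - 1) * (A + ε))).le
  have hFγ : Ffun A x⁻¹ * γ ≤ M := by
    rw [hγdef, hMdef]
    nlinarith [hlow, hsplit, hcomb1, hcomb2]
  have hFbig : M / γ < Ffun A x⁻¹ := by
    have hs : (1:ℝ) ≤ Real.sqrt x := (Real.le_sqrt' one_pos).2 (by nlinarith)
    have hFval : Real.exp (4 * Real.pi ^ 2 * A * x - A) ≤ Ffun A x⁻¹ := by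
      rw [Ffun, Real.sqrt_inv, one_div, inv_inv]
      have hAx : A * x⁻¹ ≤ A := by
        calc A * x⁻¹ ≤ A * 1 := mul_le_mul_of_nonneg_left (by
            rw [← one_div]; exact div_le_one_of_le₀ hx1 hxpos.le) hA.le
          _ = A := mul_one A
      have h8 : 4 * Real.pi ^ 2 * A * x - A ≤ 4 * Real.pi ^ 2 * A / x⁻¹ - A * x⁻¹ := by
        have h9 : 4 * Real.pi ^ 2 * A / x⁻¹ = 4 * Real.pi ^ 2 * A * x := by field_simp
        rw [h9]
        linarith
      calc Real.exp (4 * Real.pi ^ 2 * A * x - A)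
          ≤ Real.exp (4 * Real.pi ^ 2 * A / x⁻¹ - A * x⁻¹) := Real.exp_le_exp.2 h8
        _ = 1 * Real.exp (4 * Real.pi ^ 2 * A / x⁻¹ - A * x⁻¹) := (one_mul _).symm
        _ ≤ Real.sqrt x * Real.exp (4 * Real.pi ^ 2 * A / x⁻¹ - A * x⁻¹) :=
            mul_le_mul_of_nonneg_right hs (Real.exp_pos _).le
    exact lt_of_lt_of_le hxB hFval
  have hcontra := (div_lt_iff₀ hγ).1 hFbig
  linarith [hFγ, hcontra]


lemma hmeas_exp (β βb : ℝ) : Measurable fun p : ℝ × ℝ => Real.exp (-β * p.1 - βb * p.2) :=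
  Real.measurable_exp.comp ((measurable_fst.const_mul (-β)).sub (measurable_snd.const_mul βb))

lemma Ztil_map (μ : Measure (ℝ × ℝ)) (β βb : ℝ) :
    Ztil (μ.map Prod.swap) β βb = Ztil μ βb β := by
  rw [Ztil_eq, Ztil_eq]
  have h1 : Ifun (μ.map Prod.swap) β βb = Ifun μ βb β := by
    rw [Ifun, Ifun, integral_map measurable_swap.aemeasurable
      ((hmeas_exp β βb).aestronglyMeasurable)]
    congr 1
    funext p
    simp only [Prod.fst_swap, Prod.snd_swap]
    exact congrArg Real.exp (by ring)
  rw [h1]; ring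

/-- Theorem 3.1(b), measure-theoretic form: in the modular setup, for
every `ε > 0` and `Λ > 0`, the spectral measure gives positive mass both to
`{|h - A| < ε, h̄ > Λ}` and to `{h > Λ, |h̄ - A| < ε}`. -/
theorem stmt15 (A T : ℝ) (hA : 0 < A) (hT : 0 < T) (μ : Measure (ℝ × ℝ))
    (hsupp : μ {p : ℝ × ℝ | p.1 < T ∨ p.2 < T} = 0)
    (hint : ∀ β βb : ℝ, 0 < β → 0 < βb →
      Integrable (fun p : ℝ × ℝ => Real.exp (-β * p.1 - βb * p.2)) μ)
    (hmod : ∀ β βb : ℝ, 0 < β → 0 < βb →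
      Ztil μ β βb = Kker A β βb * Ztil μ (4 * Real.pi ^ 2 / β) (4 * Real.pi ^ 2 / βb))
    (ε : ℝ) (hε : 0 < ε) (Λ : ℝ) (hΛ : 0 < Λ) :
    0 < μ {p : ℝ × ℝ | |p.1 - A| < ε ∧ Λ < p.2} ∧
      0 < μ {p : ℝ × ℝ | Λ < p.1 ∧ |p.2 - A| < ε} := by
  have hε' : 0 < min ε (A/2) := lt_min hε (by linarith)
  have hε'A : min ε (A/2) < A := lt_of_le_of_lt (min_le_right _ _) (by linarith)
  constructor
  · have h := stmt15_main A T hA hT μ hsupp hint hmod (min ε (A/2)) hε' hε'A Λ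
    refine lt_of_lt_of_le h (measure_mono ?_)
    intro p hp
    exact ⟨lt_of_lt_of_le hp.1 (min_le_left _ _), hp.2⟩
  · -- apply the main lemma to the swapped measure
    have hsupp' : (μ.map Prod.swap) {p : ℝ × ℝ | p.1 < T ∨ p.2 < T} = 0 := by
      have hms : MeasurableSet {p : ℝ × ℝ | p.1 < T ∨ p.2 < T} := by
        rw [Set.setOf_or]
        exact ((isOpen_lt continuous_fst continuous_const).union
          (isOpen_lt continuous_snd continuous_const)).measurableSet
      rw [Measure.map_apply measurable_swap hms]
      have hset : Prod.swap ⁻¹' {p : ℝ × ℝ | p.1 < T ∨ p.2 < T}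
          = {p : ℝ × ℝ | p.1 < T ∨ p.2 < T} := by
        ext p
        simp only [Set.mem_preimage, Set.mem_setOf_eq, Prod.fst_swap, Prod.snd_swap]
        tauto
      rw [hset]
      exact hsupp
    have hint' : ∀ β βb : ℝ, 0 < β → 0 < βb →
        Integrable (fun p : ℝ × ℝ => Real.exp (-β * p.1 - βb * p.2)) (μ.map Prod.swap) := by
      intro β βb hβ hβb
      rw [integrable_map_measure ((hmeas_exp β βb).aestronglyMeasurable)
        measurable_swap.aemeasurable]
      have hfeq : ((fun p : ℝ × ℝ => Real.exp (-β * p.1 - βb * p.2)) ∘ Prod.swap)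
          = fun p : ℝ × ℝ => Real.exp (-βb * p.1 - β * p.2) := by
        funext p
        simp only [Function.comp_apply, Prod.fst_swap, Prod.snd_swap]
        exact congrArg Real.exp (by ring)
      rw [hfeq]
      exact hint βb β hβb hβ
    have hmod' : ∀ β βb : ℝ, 0 < β → 0 < βb →
        Ztil (μ.map Prod.swap) β βb = Kker A β βb *
          Ztil (μ.map Prod.swap) (4 * Real.pi ^ 2 / β) (4 * Real.pi ^ 2 / βb) := by
      intro β βb hβ hβb
      rw [Ztil_map, Ztil_map, hmod βb β hβb hβ, Kker_symm]
    have h := stmt15_main A T hA hT (μ.map Prod.swap) hsupp' hint' hmod'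
      (min ε (A/2)) hε' hε'A Λ
    have hms2 : MeasurableSet {p : ℝ × ℝ | |p.1 - A| < min ε (A/2) ∧ Λ < p.2} := by
      rw [Set.setOf_and]
      exact ((isOpen_lt (continuous_abs.comp (continuous_fst.sub continuous_const))
        continuous_const).measurableSet).inter
        ((isOpen_lt continuous_const continuous_snd).measurableSet)
    rw [Measure.map_apply measurable_swap hms2] at h
    refine lt_of_lt_of_le h (measure_mono ?_)
    intro p hp
    simp only [Set.mem_preimage, Set.mem_setOf_eq, Prod.fst_swap, Prod.snd_swap] at hp
    exact ⟨hp.2, lt_of_lt_of_le hp.1 (min_le_left _ _)⟩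
end

section
/- Let A ≥ T > 0, and define K(β, β̄) := (2π/√(β β̄)) · exp(4π²A/β + 4π²A/β̄ − Aβ − Aβ̄) and 𝔟(β, β̄) := β̄ − 4π²A/(Tβ) + (3/(2T))·log β. Then along every sequence (β_n, β̄_n) in (0,∞)² with β_n → 0, β̄_n → ∞ and 𝔟(β_n, β̄_n) → ∞, one has K(β_n, β̄_n) / β_n → 0. -/
open Filter

/-- `𝔟(β, β̄) = β̄ - 4π²A/(Tβ) + (3/(2T)) log β`. -/
noncomputable def bfrak (A T β βb : ℝ) : ℝ :=
  βb - 4 * Real.pi ^ 2 * A / (T * β) + 3 / (2 * T) * Real.log β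

/-- Eq. (3.26): if `A ≥ T > 0`, then in the M* limit
(`β → 0`, `β̄ → ∞`, `𝔟(β,β̄) → ∞`) one has `K(β, β̄)/β → 0`. -/
theorem stmt16 (A T : ℝ) (hT : 0 < T) (hTA : T ≤ A)
    (β βb : ℕ → ℝ) (hβpos : ∀ n, 0 < β n) (hβbpos : ∀ n, 0 < βb n)
    (hβ0 : Tendsto β atTop (nhds 0)) (hβb : Tendsto βb atTop atTop)
    (hM : Tendsto (fun n => bfrak A T (β n) (βb n)) atTop atTop) :
    Tendsto (fun n => Kker A (β n) (βb n) / β n) atTop (nhds 0) := by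
  have hA : 0 < A := lt_of_lt_of_le hT hTA
  set U : ℕ → ℝ := fun n =>
    Real.log (2 * Real.pi) - T * bfrak A T (β n) (βb n) + 4 * Real.pi ^ 2 * A / βb n with hUdef
  have hUlim : Tendsto U atTop atBot := by
    have h2 : Tendsto (fun n => Real.log (2 * Real.pi) + 4 * Real.pi ^ 2 * A / βb n)
        atTop (nhds (Real.log (2 * Real.pi) + 0)) := by
      apply Tendsto.const_add
      simpa [div_eq_mul_inv] using hβb.inv_tendsto_atTop.const_mul (4 * Real.pi ^ 2 * A)
    have h1 : Tendsto (fun n => T * bfrak A T (β n) (βb n)) atTop atTop :=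
      hM.const_mul_atTop hT
    have h1' : Tendsto (fun n => -(T * bfrak A T (β n) (βb n))) atTop atBot :=
      tendsto_neg_atBot_iff.mpr h1
    have := h2.add_atBot h1'
    apply this.congr
    intro n
    simp only [hUdef]
    ring
  have hexp : Tendsto (fun n => Real.exp (U n)) atTop (nhds 0) :=
    Real.tendsto_exp_atBot.comp hUlim
  apply squeeze_zero' (g := fun n => Real.exp (U n))
  · filter_upwards with n
    have hb := hβpos n
    have hc := hβbpos n
    unfold Kker
    positivity
  · filter_upwards [hβb.eventually_ge_atTop 1] with n hc1
    have hb := hβpos n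
    have hc := hβbpos n
    have hπ : (0:ℝ) < 2 * Real.pi := by positivity
    set E : ℝ := 4 * Real.pi ^ 2 * A / β n + 4 * Real.pi ^ 2 * A / βb n
        - A * β n - A * βb n with hE
    have hKeq : Kker A (β n) (βb n) / β n =
        Real.exp (Real.log (2 * Real.pi) + E - Real.log (Real.sqrt (β n * βb n) * β n)) := by
      rw [Real.exp_sub, Real.exp_add, Real.exp_log hπ,
        Real.exp_log (by positivity : (0:ℝ) < Real.sqrt (β n * βb n) * β n)]
      unfold Kker
      rw [← hE]
      field_simp
    rw [hKeq]
    apply Real.exp_le_exp.mpr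
    have hlog : Real.log (Real.sqrt (β n * βb n) * β n)
        = (Real.log (β n) + Real.log (βb n)) / 2 + Real.log (β n) := by
      rw [Real.log_mul (by positivity) (ne_of_gt hb), Real.log_sqrt (by positivity),
        Real.log_mul (ne_of_gt hb) (ne_of_gt hc)]
    have hTb : T * bfrak A T (β n) (βb n)
        = T * βb n - 4 * Real.pi ^ 2 * A / β n + 3 / 2 * Real.log (β n) := by
      unfold bfrak
      field_simp
    have hlogc : 0 ≤ Real.log (βb n) := Real.log_nonneg hc1
    have hTc : T * βb n ≤ A * βb n := mul_le_mul_of_nonneg_right hTA hc.le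
    have hAb : 0 ≤ A * β n := by positivity
    simp only [hUdef, hlog, hTb, hE]
    linarith
  · exact hexp
end

section
/- Under the modular setup below, for every ε > 0 and every β₀ ∈ (0,∞), along every sequence (β_n, β̄_n) with β_n → 0 and β̄_n ≥ β₀ for all n, one has (1/β_n) · K(β_n, β̄_n) · ∫_{ {(h,h̄) : h ≥ A + ε} } e^{ −(4π²/β_n) h − (4π²/β̄_n) h̄ } dμ(h, h̄) → 0. -/
open MeasureTheory Filter

set_option maxHeartbeats 1000000 in
/-- crossed-channel high-`h` estimate, Section 3.2.5: for every `ε > 0`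
and `β₀ > 0`, along sequences with `β_n → 0` and `β̄_n ≥ β₀`, the crossed-channel
contribution of `h ≥ A + ε` is `o(β)`. -/
theorem stmt17 (A T : ℝ) (hA : 0 < A) (hT : 0 < T) (μ : Measure (ℝ × ℝ))
    (hsupp : μ {p : ℝ × ℝ | p.1 < T ∨ p.2 < T} = 0)
    (hint : ∀ β βb : ℝ, 0 < β → 0 < βb →
      Integrable (fun p : ℝ × ℝ => Real.exp (-β * p.1 - βb * p.2)) μ)
    (hmod : ∀ β βb : ℝ, 0 < β → 0 < βb →
      Ztil μ β βb = Kker A β βb * Ztil μ (4 * Real.pi ^ 2 / β) (4 * Real.pi ^ 2 / βb))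
    (ε : ℝ) (hε : 0 < ε) (β₀ : ℝ) (hβ₀ : 0 < β₀)
    (β βb : ℕ → ℝ) (hβpos : ∀ n, 0 < β n) (hβb : ∀ n, β₀ ≤ βb n)
    (hβ0 : Tendsto β atTop (nhds 0)) :
    Tendsto
      (fun n => (1 / β n) * Kker A (β n) (βb n) *
        ∫ p in {p : ℝ × ℝ | A + ε ≤ p.1},
          Real.exp (-(4 * Real.pi ^ 2 / β n) * p.1 - (4 * Real.pi ^ 2 / βb n) * p.2) ∂μ)
      atTop (nhds 0) := by
  have hπ : (0:ℝ) < Real.pi := Real.pi_pos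
  have h4π : (0:ℝ) < 4 * Real.pi ^ 2 := by positivity
  have h4π1 : (1:ℝ) ≤ 4 * Real.pi ^ 2 := by nlinarith [Real.pi_gt_three]
  -- a.e. support bound
  have hae : ∀ᵐ p : ℝ × ℝ ∂μ, T ≤ p.1 ∧ T ≤ p.2 := by
    rw [ae_iff]
    convert hsupp using 2
    ext p
    simp only [Set.mem_setOf_eq, not_and_or, not_le]
  set M : ℝ := 1 + ∫ p : ℝ × ℝ, Real.exp (-(4 * Real.pi ^ 2) * p.1 - β₀ * p.2) ∂μ with hMdef
  have hM1 : (1:ℝ) ≤ M :=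
    le_add_of_nonneg_right (integral_nonneg fun p => (Real.exp_pos _).le)
  have hM0 : (0:ℝ) ≤ M := le_trans zero_le_one hM1
  set C : ℝ := 2 * Real.pi *
      Real.exp (4 * Real.pi ^ 2 * A / β₀ + 4 * Real.pi ^ 2 * A + A + ε) * M with hCdef
  have hC : 0 ≤ C :=
    mul_nonneg (mul_nonneg (by positivity) (Real.exp_pos _).le) hM0
  -- the key eventual bound
  have key : ∀ n, β n ≤ 1 →
      (1 / β n) * Kker A (β n) (βb n) *
        ∫ p in {p : ℝ × ℝ | A + ε ≤ p.1},
          Real.exp (-(4 * Real.pi ^ 2 / β n) * p.1 - (4 * Real.pi ^ 2 / βb n) * p.2) ∂μ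
      ≤ C * ((β n)⁻¹ * Real.sqrt (β n)⁻¹ *
          Real.exp (-(4 * Real.pi ^ 2 * ε) * (β n)⁻¹)) := by
    intro n hβ1
    have hbn : 0 < β n := hβpos n
    have hB0 : 0 < βb n := lt_of_lt_of_le hβ₀ (hβb n)
    have hB0' : βb n ≠ 0 := ne_of_gt hB0
    set b : ℝ := 4 * Real.pi ^ 2 / β n with hbdef
    set s : ℝ := 4 * Real.pi ^ 2 / βb n with hsdef
    have hbpos : 0 < b := div_pos h4π hbn
    have hspos : 0 < s := div_pos h4π hB0
    have hb1 : 1 ≤ b := by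
      rw [hbdef, le_div_iff₀ hbn]; nlinarith
    have h4s : 4 * Real.pi ^ 2 / s = βb n := by
      rw [hsdef]; field_simp
    have hS : MeasurableSet {p : ℝ × ℝ | A + ε ≤ p.1} :=
      measurableSet_le measurable_const measurable_fst
    -- Step 1: pull out the decay on the set
    have I1 : (∫ p in {p : ℝ × ℝ | A + ε ≤ p.1},
          Real.exp (-b * p.1 - s * p.2) ∂μ)
        ≤ Real.exp (-(b - 1) * (A + ε)) *
          ∫ p : ℝ × ℝ, Real.exp (-1 * p.1 - s * p.2) ∂μ := by
      calc (∫ p in {p : ℝ × ℝ | A + ε ≤ p.1}, Real.exp (-b * p.1 - s * p.2) ∂μ)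
          ≤ ∫ p in {p : ℝ × ℝ | A + ε ≤ p.1},
              Real.exp (-(b - 1) * (A + ε)) * Real.exp (-1 * p.1 - s * p.2) ∂μ := by
            apply setIntegral_mono_on (hint b s hbpos hspos).integrableOn
              (((hint 1 s one_pos hspos).const_mul _).integrableOn) hS
            intro p hp
            rw [← Real.exp_add]
            apply Real.exp_le_exp.mpr
            have hp' : A + ε ≤ p.1 := hp
            linarith [mul_le_mul_of_nonneg_left hp' (sub_nonneg.mpr hb1)]
        _ ≤ ∫ p : ℝ × ℝ,
              Real.exp (-(b - 1) * (A + ε)) * Real.exp (-1 * p.1 - s * p.2) ∂μ := by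
            apply setIntegral_le_integral ((hint 1 s one_pos hspos).const_mul _)
            filter_upwards with p using by positivity
        _ = Real.exp (-(b - 1) * (A + ε)) *
              ∫ p : ℝ × ℝ, Real.exp (-1 * p.1 - s * p.2) ∂μ := by
            rw [integral_const_mul]
    -- Step 2: the full integral is bounded by the partition function
    have I2 : (∫ p : ℝ × ℝ, Real.exp (-1 * p.1 - s * p.2) ∂μ) ≤ Ztil μ 1 s := by
      apply le_add_of_nonneg_left
      have h1 : Real.exp (-1 : ℝ) ≤ 1 := by
        rw [← Real.exp_zero]; exact Real.exp_le_exp.mpr (by norm_num)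
      have h2 : Real.exp (-s) ≤ 1 := by
        rw [← Real.exp_zero]; exact Real.exp_le_exp.mpr (by linarith)
      nlinarith
    -- Step 3: modular invariance at (1, s)
    have I3 : Ztil μ 1 s = Kker A 1 s * Ztil μ (4 * Real.pi ^ 2) (βb n) := by
      have h := hmod 1 s one_pos hspos
      rwa [div_one, h4s] at h
    -- Step 4: Ztil μ (4π²) (βb n) ≤ M
    have I4 : Ztil μ (4 * Real.pi ^ 2) (βb n) ≤ M := by
      rw [Ztil, hMdef]
      apply add_le_add
      · have h1 : Real.exp (-(4 * Real.pi ^ 2)) ≤ 1 := by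
          rw [← Real.exp_zero]; exact Real.exp_le_exp.mpr (by linarith)
        have h2 : Real.exp (-(βb n)) ≤ 1 := by
          rw [← Real.exp_zero]; exact Real.exp_le_exp.mpr (by linarith)
        nlinarith [Real.exp_pos (-(4 * Real.pi ^ 2)), Real.exp_pos (-(βb n))]
      · apply integral_mono_ae (hint _ _ h4π hB0) (hint _ _ h4π hβ₀)
        filter_upwards [hae] with p hp
        apply Real.exp_le_exp.mpr
        have : β₀ * p.2 ≤ βb n * p.2 :=
          mul_le_mul_of_nonneg_right (hβb n) (le_trans hT.le hp.2)
        linarith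
    -- Step 5: bound on Kker A 1 s
    have hsqrt4π : Real.sqrt (4 * Real.pi ^ 2) = 2 * Real.pi := by
      rw [show 4 * Real.pi ^ 2 = (2 * Real.pi) ^ 2 by ring, Real.sqrt_sq (by positivity)]
    have hsqrtB : (0:ℝ) < Real.sqrt (βb n) := Real.sqrt_pos.mpr hB0
    have I5 : Kker A 1 s ≤ Real.sqrt (βb n) *
        (Real.exp (4 * Real.pi ^ 2 * A) * Real.exp (A * βb n)) := by
      have h2πs : 2 * Real.pi / Real.sqrt (1 * s) = Real.sqrt (βb n) := by
        rw [one_mul, hsdef, Real.sqrt_div h4π.le, hsqrt4π]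
        field_simp
      have hAs : 4 * Real.pi ^ 2 * A / s = A * βb n := by
        rw [hsdef]; field_simp
      rw [Kker, h2πs, hAs, div_one]
      apply mul_le_mul_of_nonneg_left _ hsqrtB.le
      rw [← Real.exp_add]
      apply Real.exp_le_exp.mpr
      have h1 := mul_pos hA hspos
      linarith
    -- Step 6: bound on Kker A (β n) (βb n) * √(βb n) * exp(A βb n)
    have I6 : Kker A (β n) (βb n) * Real.sqrt (βb n) * Real.exp (A * βb n)
        ≤ 2 * Real.pi / Real.sqrt (β n) *
          Real.exp (4 * Real.pi ^ 2 * A / β n + 4 * Real.pi ^ 2 * A / β₀) := by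
      have hsplit : 2 * Real.pi / Real.sqrt (β n * βb n) * Real.sqrt (βb n)
          = 2 * Real.pi / Real.sqrt (β n) := by
        rw [Real.sqrt_mul hbn.le]
        have h1 : Real.sqrt (β n) ≠ 0 := ne_of_gt (Real.sqrt_pos.mpr hbn)
        have h2 : Real.sqrt (βb n) ≠ 0 := ne_of_gt hsqrtB
        field_simp
      calc Kker A (β n) (βb n) * Real.sqrt (βb n) * Real.exp (A * βb n)
          = (2 * Real.pi / Real.sqrt (β n * βb n) * Real.sqrt (βb n)) *
            Real.exp ((4 * Real.pi ^ 2 * A / β n + 4 * Real.pi ^ 2 * A / βb n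
              - A * β n - A * βb n) + A * βb n) := by
            rw [Kker, Real.exp_add]; ring
        _ = 2 * Real.pi / Real.sqrt (β n) *
            Real.exp (4 * Real.pi ^ 2 * A / β n + 4 * Real.pi ^ 2 * A / βb n - A * β n) := by
            rw [hsplit]; ring_nf
        _ ≤ 2 * Real.pi / Real.sqrt (β n) *
            Real.exp (4 * Real.pi ^ 2 * A / β n + 4 * Real.pi ^ 2 * A / β₀) := by
            apply mul_le_mul_of_nonneg_left _ (by positivity)
            apply Real.exp_le_exp.mpr
            have hdiv : 4 * Real.pi ^ 2 * A / βb n ≤ 4 * Real.pi ^ 2 * A / β₀ :=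
              div_le_div_of_nonneg_left (by positivity) hβ₀ (hβb n)
            have h1 := mul_pos hA hbn
            linarith
    -- assemble
    have hKpos : 0 ≤ Kker A (β n) (βb n) := by
      rw [Kker]; positivity
    have hexp3 : Real.exp (4 * Real.pi ^ 2 * A / β n + 4 * Real.pi ^ 2 * A / β₀) *
        (Real.exp (-(b - 1) * (A + ε)) * Real.exp (4 * Real.pi ^ 2 * A))
        = Real.exp (4 * Real.pi ^ 2 * A / β₀ + 4 * Real.pi ^ 2 * A + A + ε) *
          Real.exp (-(4 * Real.pi ^ 2 * ε) * (β n)⁻¹) := by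
      rw [← Real.exp_add, ← Real.exp_add, ← Real.exp_add]
      congr 1
      rw [hbdef]
      field_simp
      ring
    calc (1 / β n) * Kker A (β n) (βb n) *
          ∫ p in {p : ℝ × ℝ | A + ε ≤ p.1},
            Real.exp (-b * p.1 - s * p.2) ∂μ
        ≤ (1 / β n) * Kker A (β n) (βb n) *
          (Real.exp (-(b - 1) * (A + ε)) *
            (Real.sqrt (βb n) * (Real.exp (4 * Real.pi ^ 2 * A) * Real.exp (A * βb n)) * M)) := by
          apply mul_le_mul_of_nonneg_left _ (mul_nonneg (one_div_nonneg.mpr hbn.le) hKpos)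
          calc (∫ p in {p : ℝ × ℝ | A + ε ≤ p.1}, Real.exp (-b * p.1 - s * p.2) ∂μ)
              ≤ Real.exp (-(b - 1) * (A + ε)) *
                ∫ p : ℝ × ℝ, Real.exp (-1 * p.1 - s * p.2) ∂μ := I1
            _ ≤ Real.exp (-(b - 1) * (A + ε)) * (Kker A 1 s * M) := by
                apply mul_le_mul_of_nonneg_left _ (Real.exp_pos _).le
                calc (∫ p : ℝ × ℝ, Real.exp (-1 * p.1 - s * p.2) ∂μ)
                    ≤ Ztil μ 1 s := I2
                  _ = Kker A 1 s * Ztil μ (4 * Real.pi ^ 2) (βb n) := I3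
                  _ ≤ Kker A 1 s * M := by
                      apply mul_le_mul_of_nonneg_left I4
                      rw [Kker]; positivity
            _ ≤ Real.exp (-(b - 1) * (A + ε)) *
                (Real.sqrt (βb n) * (Real.exp (4 * Real.pi ^ 2 * A) * Real.exp (A * βb n)) * M) := by
                apply mul_le_mul_of_nonneg_left _ (Real.exp_pos _).le
                exact mul_le_mul_of_nonneg_right I5 hM0
      _ = (Kker A (β n) (βb n) * Real.sqrt (βb n) * Real.exp (A * βb n)) *
          ((1 / β n) * Real.exp (-(b - 1) * (A + ε)) * Real.exp (4 * Real.pi ^ 2 * A) * M) := by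
          ring
      _ ≤ (2 * Real.pi / Real.sqrt (β n) *
            Real.exp (4 * Real.pi ^ 2 * A / β n + 4 * Real.pi ^ 2 * A / β₀)) *
          ((1 / β n) * Real.exp (-(b - 1) * (A + ε)) * Real.exp (4 * Real.pi ^ 2 * A) * M) := by
          exact mul_le_mul_of_nonneg_right I6
            (mul_nonneg (mul_nonneg (mul_nonneg (by positivity) (Real.exp_pos _).le)
              (Real.exp_pos _).le) hM0)
      _ = C * ((β n)⁻¹ * Real.sqrt (β n)⁻¹ *
          Real.exp (-(4 * Real.pi ^ 2 * ε) * (β n)⁻¹)) := by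
          rw [hCdef]
          have : 2 * Real.pi / Real.sqrt (β n) *
              Real.exp (4 * Real.pi ^ 2 * A / β n + 4 * Real.pi ^ 2 * A / β₀) *
              ((1 / β n) * Real.exp (-(b - 1) * (A + ε)) * Real.exp (4 * Real.pi ^ 2 * A) * M)
              = 2 * Real.pi *
                (Real.exp (4 * Real.pi ^ 2 * A / β n + 4 * Real.pi ^ 2 * A / β₀) *
                  (Real.exp (-(b - 1) * (A + ε)) * Real.exp (4 * Real.pi ^ 2 * A))) * M *
                ((β n)⁻¹ * (Real.sqrt (β n))⁻¹) := by
            have h1 : Real.sqrt (β n) ≠ 0 := ne_of_gt (Real.sqrt_pos.mpr hbn)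
            have h2 : β n ≠ 0 := ne_of_gt hbn
            field_simp
          rw [this, hexp3, Real.sqrt_inv]
          ring
  -- positivity of the terms
  have hnonneg : ∀ n, 0 ≤ (1 / β n) * Kker A (β n) (βb n) *
      ∫ p in {p : ℝ × ℝ | A + ε ≤ p.1},
        Real.exp (-(4 * Real.pi ^ 2 / β n) * p.1 - (4 * Real.pi ^ 2 / βb n) * p.2) ∂μ := by
    intro n
    apply mul_nonneg
    · apply mul_nonneg (one_div_nonneg.mpr (hβpos n).le)
      rw [Kker]; positivity
    · exact integral_nonneg fun p => (Real.exp_pos _).le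
  -- the dominating sequence tends to zero
  have ht : Tendsto (fun n => (β n)⁻¹) atTop atTop := by
    apply Filter.Tendsto.inv_tendsto_nhdsGT_zero
    exact tendsto_nhdsWithin_of_tendsto_nhds_of_eventually_within _ hβ0
      (Eventually.of_forall fun n => hβpos n)
  have hg : Tendsto (fun t : ℝ => C * (t * Real.sqrt t * Real.exp (-(4 * Real.pi ^ 2 * ε) * t)))
      atTop (nhds 0) := by
    have hc : (0:ℝ) < 4 * Real.pi ^ 2 * ε := by positivity
    have h2 : Tendsto (fun t : ℝ => C * (t ^ (2:ℝ) * Real.exp (-(4 * Real.pi ^ 2 * ε) * t)))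
        atTop (nhds 0) := by
      simpa using (tendsto_rpow_mul_exp_neg_mul_atTop_nhds_zero 2 _ hc).const_mul C
    apply squeeze_zero' ?_ ?_ h2
    · filter_upwards [eventually_ge_atTop (0:ℝ)] with t ht0
      positivity
    · filter_upwards [eventually_ge_atTop (1:ℝ)] with t ht1
      have ht0 : (0:ℝ) ≤ t := le_trans zero_le_one ht1
      have hts : t * Real.sqrt t ≤ t ^ (2:ℝ) := by
        rw [show (2:ℝ) = ((2:ℕ):ℝ) by norm_num, Real.rpow_natCast]
        nlinarith [Real.sqrt_nonneg t, Real.sq_sqrt ht0]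
      apply mul_le_mul_of_nonneg_left _ hC
      exact mul_le_mul_of_nonneg_right hts (Real.exp_pos _).le
  have hgn : Tendsto (fun n => C * ((β n)⁻¹ * Real.sqrt (β n)⁻¹ *
      Real.exp (-(4 * Real.pi ^ 2 * ε) * (β n)⁻¹))) atTop (nhds 0) := hg.comp ht
  apply squeeze_zero' (Eventually.of_forall hnonneg) ?_ hgn
  have hev : ∀ᶠ n in atTop, β n ≤ 1 := hβ0.eventually (eventually_le_nhds (by norm_num))
  filter_upwards [hev] with n hn using key n hn
end

section
/- Under the modular setup below, for every ε ∈ (0, A), along every sequence (β_n, β̄_n) in (0,∞)² tending to the M* limit (i.e. β_n → 0, β̄_n → ∞, 𝔟(β_n, β̄_n) → ∞), one has (1/β_n) · K(β_n, β̄_n) · ∫_{ {(h,h̄) : h ≤ A − ε} } e^{ −(4π²/β_n) h − (4π²/β̄_n) h̄ } dμ(h, h̄) → 0. -/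
open MeasureTheory Filter

set_option maxHeartbeats 1000000 in
/-- crossed-channel low-`h` estimate, Section 3.2.6: for every
`ε ∈ (0, A)`, along sequences in the M* limit (`β → 0`, `β̄ → ∞`, `𝔟 → ∞`), the
crossed-channel contribution of `h ≤ A - ε` is `o(β)`. -/
theorem stmt18 (A T : ℝ) (hA : 0 < A) (hT : 0 < T) (μ : Measure (ℝ × ℝ))
    (hsupp : μ {p : ℝ × ℝ | p.1 < T ∨ p.2 < T} = 0)
    (hint : ∀ β βb : ℝ, 0 < β → 0 < βb →
      Integrable (fun p : ℝ × ℝ => Real.exp (-β * p.1 - βb * p.2)) μ)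
    (hmod : ∀ β βb : ℝ, 0 < β → 0 < βb →
      Ztil μ β βb = Kker A β βb * Ztil μ (4 * Real.pi ^ 2 / β) (4 * Real.pi ^ 2 / βb))
    (ε : ℝ) (hε0 : 0 < ε) (hεA : ε < A)
    (β βb : ℕ → ℝ) (hβpos : ∀ n, 0 < β n) (hβbpos : ∀ n, 0 < βb n)
    (hβ0 : Tendsto β atTop (nhds 0)) (hβb : Tendsto βb atTop atTop)
    (hM : Tendsto (fun n => bfrak A T (β n) (βb n)) atTop atTop) :
    Tendsto
      (fun n => (1 / β n) * Kker A (β n) (βb n) *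
        ∫ p in {p : ℝ × ℝ | p.1 ≤ A - ε},
          Real.exp (-(4 * Real.pi ^ 2 / β n) * p.1 - (4 * Real.pi ^ 2 / βb n) * p.2) ∂μ)
      atTop (nhds 0) := by
  have hπ2 : (0:ℝ) < 4 * Real.pi ^ 2 := by positivity
  have hπ2' : (1:ℝ) ≤ 4 * Real.pi ^ 2 := by nlinarith [Real.pi_gt_three]
  have hAε : 0 < A - ε := sub_pos.2 hεA
  -- a.e. support bound
  have hae : ∀ᵐ p ∂μ, T ≤ p.1 ∧ T ≤ p.2 := by
    rw [ae_iff]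
    have hset : {p : ℝ × ℝ | ¬(T ≤ p.1 ∧ T ≤ p.2)} = {p : ℝ × ℝ | p.1 < T ∨ p.2 < T} := by
      ext p
      rw [Set.mem_setOf_eq, Set.mem_setOf_eq, not_and_or, not_le, not_le]
    rw [hset]; exact hsupp
  -- generic comparison of exponential integrals
  have intle : ∀ a c a' c' : ℝ, 0 < a' → 0 < c' → a' ≤ a → c' ≤ c →
      (∫ p : ℝ × ℝ, Real.exp (-a * p.1 - c * p.2) ∂μ) ≤
        Real.exp ((a' - a) * T + (c' - c) * T) *
          ∫ p : ℝ × ℝ, Real.exp (-a' * p.1 - c' * p.2) ∂μ := by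
    intro a c a' c' ha' hc' haa hcc
    rw [← integral_const_mul]
    refine integral_mono_ae (hint a c (ha'.trans_le haa) (hc'.trans_le hcc))
      ((hint a' c' ha' hc').const_mul _) ?_
    filter_upwards [hae] with p hp
    rw [← Real.exp_add, Real.exp_le_exp]
    have h1 : (a - a') * T ≤ (a - a') * p.1 :=
      mul_le_mul_of_nonneg_left hp.1 (by linarith)
    have h2 : (c - c') * T ≤ (c - c') * p.2 :=
      mul_le_mul_of_nonneg_left hp.2 (by linarith)
    nlinarith [h1, h2]
  -- vacuum bounds
  have hvac0 : ∀ x y : ℝ, 0 < x → 0 < y → 0 ≤ (1 - Real.exp (-x)) * (1 - Real.exp (-y)) := by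
    intro x y hx hy
    have h1 : Real.exp (-x) ≤ 1 := Real.exp_le_one_iff.2 (by linarith)
    have h2 : Real.exp (-y) ≤ 1 := Real.exp_le_one_iff.2 (by linarith)
    nlinarith
  have hvacx : ∀ x y : ℝ, 0 < x → 0 < y → (1 - Real.exp (-x)) * (1 - Real.exp (-y)) ≤ x := by
    intro x y hx hy
    have h1 : Real.exp (-x) ≤ 1 := Real.exp_le_one_iff.2 (by linarith)
    have h2 : Real.exp (-y) ≤ 1 := Real.exp_le_one_iff.2 (by linarith)
    have h3 : -x + 1 ≤ Real.exp (-x) := Real.add_one_le_exp (-x)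
    have h4 : (0:ℝ) ≤ Real.exp (-y) := (Real.exp_pos _).le
    nlinarith
  have hinvinv : ∀ x : ℝ, 0 < x → 4 * Real.pi ^ 2 / (4 * Real.pi ^ 2 / x) = x := by
    intro x hx; field_simp
  have hKnn : ∀ x y : ℝ, 0 ≤ Kker A x y := by
    intro x y; rw [Kker]; positivity
  -- the constant D
  set D : ℝ := ∫ p : ℝ × ℝ, Real.exp (-1 * p.1 - (4 * Real.pi ^ 2) * p.2) ∂μ with hDdef
  have hD0 : 0 ≤ D := integral_nonneg fun p => (Real.exp_pos _).le
  set δ : ℝ := T / (2 * (A - ε)) with hδdef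
  have hδpos : 0 < δ := by positivity
  set C2 : ℝ := 2 * Real.pi * Real.exp (4 * Real.pi ^ 2 * A + T) * (1 + D) with hC2def
  set g : ℕ → ℝ := fun k =>
    Real.exp A * (Real.exp (-(ε * (δ * bfrak A T (β k) (βb k)))) +
      Real.exp (-(ε * (4 * Real.pi ^ 2 / β k)))) +
    C2 * Real.exp (-(T / 2 * bfrak A T (β k) (βb k))) with hgdef
  have hg : Tendsto g atTop (nhds 0) := by
    have hF : Tendsto (fun n => bfrak A T (β n) (βb n)) atTop atTop := hM
    have hb' : Tendsto (fun n => 4 * Real.pi ^ 2 / β n) atTop atTop := by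
      have h1 : Tendsto β atTop (nhdsWithin 0 (Set.Ioi 0)) :=
        tendsto_nhdsWithin_of_tendsto_nhds_of_eventually_within β hβ0
          (Eventually.of_forall fun n => hβpos n)
      have h2 : Tendsto (fun n => (β n)⁻¹) atTop atTop := tendsto_inv_nhdsGT_zero.comp h1
      have h3 := h2.const_mul_atTop hπ2
      simpa [div_eq_mul_inv] using h3
    have e1 : Tendsto (fun n => Real.exp (-(ε * (δ * bfrak A T (β n) (βb n))))) atTop (nhds 0) := by
      refine Real.tendsto_exp_atBot.comp ?_
      exact tendsto_neg_atTop_atBot.comp ((hF.const_mul_atTop hδpos).const_mul_atTop hε0)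
    have e2 : Tendsto (fun n => Real.exp (-(ε * (4 * Real.pi ^ 2 / β n)))) atTop (nhds 0) := by
      refine Real.tendsto_exp_atBot.comp ?_
      exact tendsto_neg_atTop_atBot.comp (hb'.const_mul_atTop hε0)
    have e3 : Tendsto (fun n => Real.exp (-(T / 2 * bfrak A T (β n) (βb n)))) atTop (nhds 0) := by
      refine Real.tendsto_exp_atBot.comp ?_
      exact tendsto_neg_atTop_atBot.comp (hF.const_mul_atTop (by linarith : (0:ℝ) < T / 2))
    have := ((e1.add e2).const_mul (Real.exp A)).add (e3.const_mul C2)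
    simpa using this
  refine squeeze_zero' ?_ ?_ hg
  · filter_upwards with n
    refine mul_nonneg (mul_nonneg (one_div_nonneg.2 (hβpos n).le) (hKnn _ _)) ?_
    exact setIntegral_nonneg (measurableSet_le measurable_fst measurable_const)
      fun p _ => (Real.exp_pos _).le
  · have ev1 : ∀ᶠ n in atTop, β n ≤ 1 := by
      have := hβ0.eventually (eventually_le_nhds (by norm_num : (0:ℝ) < 1))
      exact this
    have ev2 : ∀ᶠ n in atTop, 1 ≤ βb n := hβb.eventually_ge_atTop 1
    have ev3 : ∀ᶠ n in atTop, 0 ≤ bfrak A T (β n) (βb n) := hM.eventually_ge_atTop 0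
    filter_upwards [ev1, ev2, ev3] with n hb1 hbb1 hF0
    have hb : 0 < β n := hβpos n
    have hbb : 0 < βb n := hβbpos n
    set b : ℝ := β n with hbdef
    set bb : ℝ := βb n with hbbdef
    set Fb : ℝ := bfrak A T b bb with hFbdef
    set σ : ℝ := min (δ * Fb) (4 * Real.pi ^ 2 / b) with hσdef
    have hb''pos : (0:ℝ) < 4 * Real.pi ^ 2 / b := by positivity
    have hb''1 : (1:ℝ) ≤ 4 * Real.pi ^ 2 / b := by
      have := div_le_div_of_nonneg_left hπ2.le hb hb1
      rw [div_one] at this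
      linarith
    have hσ0 : 0 ≤ σ := le_min (mul_nonneg hδpos.le hF0) hb''pos.le
    have hσδ : σ ≤ δ * Fb := min_le_left _ _
    have hσb'' : σ ≤ 4 * Real.pi ^ 2 / b := min_le_right _ _
    have hbσ : 0 < 4 * Real.pi ^ 2 / b + σ := by linarith
    have hbσ1 : (1:ℝ) ≤ 4 * Real.pi ^ 2 / b + σ := by linarith
    have hbb'pos : (0:ℝ) < 4 * Real.pi ^ 2 / bb := by positivity
    have hspos : (0:ℝ) < 4 * Real.pi ^ 2 / (4 * Real.pi ^ 2 / b + σ) := by positivity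
    have hsb : 4 * Real.pi ^ 2 / (4 * Real.pi ^ 2 / b + σ) ≤ b := by
      rw [div_le_iff₀ hbσ]
      have h1 : b * (4 * Real.pi ^ 2 / b) = 4 * Real.pi ^ 2 := by field_simp
      nlinarith [mul_nonneg hb.le hσ0]
    have hid1 : 4 * Real.pi ^ 2 / (4 * Real.pi ^ 2 / bb) = bb := hinvinv bb hbb
    have hid2 : 4 * Real.pi ^ 2 / (4 * Real.pi ^ 2 / (4 * Real.pi ^ 2 / b + σ)) =
        4 * Real.pi ^ 2 / b + σ := hinvinv _ hbσ
    -- step 1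
    have step1 : (∫ p in {p : ℝ × ℝ | p.1 ≤ A - ε},
          Real.exp (-(4 * Real.pi ^ 2 / b) * p.1 - (4 * Real.pi ^ 2 / bb) * p.2) ∂μ)
        ≤ Real.exp (σ * (A - ε)) *
          ∫ p : ℝ × ℝ, Real.exp (-(4 * Real.pi ^ 2 / b + σ) * p.1 - (4 * Real.pi ^ 2 / bb) * p.2) ∂μ := by
      have hmeas : MeasurableSet {p : ℝ × ℝ | p.1 ≤ A - ε} :=
        measurableSet_le measurable_fst measurable_const
      calc (∫ p in {p : ℝ × ℝ | p.1 ≤ A - ε},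
            Real.exp (-(4 * Real.pi ^ 2 / b) * p.1 - (4 * Real.pi ^ 2 / bb) * p.2) ∂μ)
          ≤ ∫ p in {p : ℝ × ℝ | p.1 ≤ A - ε},
            Real.exp (σ * (A - ε)) *
              Real.exp (-(4 * Real.pi ^ 2 / b + σ) * p.1 - (4 * Real.pi ^ 2 / bb) * p.2) ∂μ := by
            refine setIntegral_mono_on ((hint _ _ hb''pos hbb'pos).integrableOn)
              (((hint _ _ hbσ hbb'pos).const_mul _).integrableOn) hmeas ?_
            intro p hp
            rw [← Real.exp_add, Real.exp_le_exp]
            have h1 : σ * p.1 ≤ σ * (A - ε) := mul_le_mul_of_nonneg_left hp hσ0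
            have h2 : (4 * Real.pi ^ 2 / b + σ) * p.1 = (4 * Real.pi ^ 2 / b) * p.1 + σ * p.1 := by
              ring
            linarith
        _ = Real.exp (σ * (A - ε)) * ∫ p in {p : ℝ × ℝ | p.1 ≤ A - ε},
              Real.exp (-(4 * Real.pi ^ 2 / b + σ) * p.1 - (4 * Real.pi ^ 2 / bb) * p.2) ∂μ :=
            integral_const_mul _ _
        _ ≤ _ := by
            refine mul_le_mul_of_nonneg_left ?_ (Real.exp_nonneg _)
            exact setIntegral_le_integral (hint _ _ hbσ hbb'pos)
              (Eventually.of_forall fun p => (Real.exp_pos _).le)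
    -- step 2
    have step2 : (∫ p : ℝ × ℝ,
          Real.exp (-(4 * Real.pi ^ 2 / b + σ) * p.1 - (4 * Real.pi ^ 2 / bb) * p.2) ∂μ)
        ≤ Ztil μ (4 * Real.pi ^ 2 / b + σ) (4 * Real.pi ^ 2 / bb) :=
      le_add_of_nonneg_left (hvac0 _ _ hbσ hbb'pos)
    -- step 3
    have step3 : Ztil μ (4 * Real.pi ^ 2 / b + σ) (4 * Real.pi ^ 2 / bb)
        = Kker A (4 * Real.pi ^ 2 / b + σ) (4 * Real.pi ^ 2 / bb) *
          Ztil μ (4 * Real.pi ^ 2 / (4 * Real.pi ^ 2 / b + σ)) bb := by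
      rw [hmod _ _ hbσ hbb'pos, hid1]
    -- step 4
    have step4 : Ztil μ (4 * Real.pi ^ 2 / (4 * Real.pi ^ 2 / b + σ)) bb
        ≤ b + Real.exp ((1 - bb) * T) *
            Ztil μ (4 * Real.pi ^ 2 / (4 * Real.pi ^ 2 / b + σ)) 1 := by
      rw [Ztil, Ztil]
      have h1 : (1 - Real.exp (-(4 * Real.pi ^ 2 / (4 * Real.pi ^ 2 / b + σ)))) *
          (1 - Real.exp (-bb)) ≤ b := (hvacx _ _ hspos hbb).trans hsb
      have h2 : (∫ p : ℝ × ℝ,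
            Real.exp (-(4 * Real.pi ^ 2 / (4 * Real.pi ^ 2 / b + σ)) * p.1 - bb * p.2) ∂μ)
          ≤ Real.exp ((1 - bb) * T) *
            ((1 - Real.exp (-(4 * Real.pi ^ 2 / (4 * Real.pi ^ 2 / b + σ)))) *
              (1 - Real.exp (-1)) +
             ∫ p : ℝ × ℝ,
              Real.exp (-(4 * Real.pi ^ 2 / (4 * Real.pi ^ 2 / b + σ)) * p.1 - 1 * p.2) ∂μ) := by
        have h3 := intle (4 * Real.pi ^ 2 / (4 * Real.pi ^ 2 / b + σ)) bb
          (4 * Real.pi ^ 2 / (4 * Real.pi ^ 2 / b + σ)) 1 hspos one_pos le_rfl hbb1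
        have h4 : (4 * Real.pi ^ 2 / (4 * Real.pi ^ 2 / b + σ) -
            4 * Real.pi ^ 2 / (4 * Real.pi ^ 2 / b + σ)) * T + (1 - bb) * T = (1 - bb) * T := by
          ring
        rw [h4] at h3
        refine h3.trans ?_
        refine mul_le_mul_of_nonneg_left ?_ (Real.exp_nonneg _)
        exact le_add_of_nonneg_left (hvac0 _ _ hspos one_pos)
      exact add_le_add h1 h2
    -- step 5
    have step5 : Ztil μ (4 * Real.pi ^ 2 / (4 * Real.pi ^ 2 / b + σ)) 1
        = Kker A (4 * Real.pi ^ 2 / (4 * Real.pi ^ 2 / b + σ)) 1 *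
          Ztil μ (4 * Real.pi ^ 2 / b + σ) (4 * Real.pi ^ 2) := by
      rw [hmod _ _ hspos one_pos, hid2, div_one]
    -- step 6
    have step6 : Ztil μ (4 * Real.pi ^ 2 / b + σ) (4 * Real.pi ^ 2) ≤ 1 + D := by
      rw [Ztil]
      refine add_le_add ?_ ?_
      · have h1 : Real.exp (-(4 * Real.pi ^ 2 / b + σ)) ≤ 1 := Real.exp_le_one_iff.2 (by linarith)
        have h2 : Real.exp (-(4 * Real.pi ^ 2)) ≤ 1 := Real.exp_le_one_iff.2 (by linarith)
        have h3 : (0:ℝ) ≤ Real.exp (-(4 * Real.pi ^ 2 / b + σ)) := (Real.exp_pos _).le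
        have h4 : (0:ℝ) ≤ Real.exp (-(4 * Real.pi ^ 2)) := (Real.exp_pos _).le
        nlinarith
      · have h3 := intle (4 * Real.pi ^ 2 / b + σ) (4 * Real.pi ^ 2) 1 (4 * Real.pi ^ 2)
          one_pos hπ2 hbσ1 le_rfl
        refine h3.trans ?_
        rw [← hDdef]
        refine mul_le_of_le_one_left hD0 ?_
        refine Real.exp_le_one_iff.2 ?_
        nlinarith
    -- assemble the integral bound
    have hIb : (∫ p in {p : ℝ × ℝ | p.1 ≤ A - ε},
          Real.exp (-(4 * Real.pi ^ 2 / b) * p.1 - (4 * Real.pi ^ 2 / bb) * p.2) ∂μ)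
        ≤ Real.exp (σ * (A - ε)) *
            (Kker A (4 * Real.pi ^ 2 / b + σ) (4 * Real.pi ^ 2 / bb) *
              (b + Real.exp ((1 - bb) * T) *
                (Kker A (4 * Real.pi ^ 2 / (4 * Real.pi ^ 2 / b + σ)) 1 * (1 + D)))) := by
      refine step1.trans ?_
      refine mul_le_mul_of_nonneg_left ?_ (Real.exp_nonneg _)
      refine (step2.trans_eq step3).trans ?_
      refine mul_le_mul_of_nonneg_left ?_ (hKnn _ _)
      refine (step4.trans ?_)
      refine add_le_add_right ?_ b
      refine mul_le_mul_of_nonneg_left ?_ (Real.exp_nonneg _)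
      rw [step5]
      exact mul_le_mul_of_nonneg_left step6 (hKnn _ _)
    -- definitional unfoldings of the kernels
    have hK1 : Kker A b bb = (2 * Real.pi / Real.sqrt (b * bb)) * Real.exp (4 * Real.pi ^ 2 * A / b + 4 * Real.pi ^ 2 * A / bb - A * b - A * bb) := rfl
    have hK2 : Kker A (4 * Real.pi ^ 2 / b + σ) (4 * Real.pi ^ 2 / bb) = (2 * Real.pi / Real.sqrt ((4 * Real.pi ^ 2 / b + σ) * (4 * Real.pi ^ 2 / bb))) * Real.exp (4 * Real.pi ^ 2 * A / (4 * Real.pi ^ 2 / b + σ) + 4 * Real.pi ^ 2 * A / (4 * Real.pi ^ 2 / bb) - A * (4 * Real.pi ^ 2 / b + σ) - A * (4 * Real.pi ^ 2 / bb)) := rfl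
    have hK3 : Kker A (4 * Real.pi ^ 2 / (4 * Real.pi ^ 2 / b + σ)) 1 = (2 * Real.pi / Real.sqrt (4 * Real.pi ^ 2 / (4 * Real.pi ^ 2 / b + σ) * 1)) * Real.exp (4 * Real.pi ^ 2 * A / (4 * Real.pi ^ 2 / (4 * Real.pi ^ 2 / b + σ)) + 4 * Real.pi ^ 2 * A / 1 - A * (4 * Real.pi ^ 2 / (4 * Real.pi ^ 2 / b + σ)) - A * 1) := rfl
    -- helper equalities for exponents
    have hq1 : 4 * Real.pi ^ 2 * A / (4 * Real.pi ^ 2 / bb) = A * bb := by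
      rw [show 4 * Real.pi ^ 2 * A / (4 * Real.pi ^ 2 / bb) = A * (4 * Real.pi ^ 2 / (4 * Real.pi ^ 2 / bb)) by ring, hid1]
    have hq2 : 4 * Real.pi ^ 2 * A / (4 * Real.pi ^ 2 / b + σ) ≤ A := by
      rw [show 4 * Real.pi ^ 2 * A / (4 * Real.pi ^ 2 / b + σ) = A * (4 * Real.pi ^ 2 / (4 * Real.pi ^ 2 / b + σ)) by ring]
      calc A * (4 * Real.pi ^ 2 / (4 * Real.pi ^ 2 / b + σ)) ≤ A * b := mul_le_mul_of_nonneg_left hsb hA.le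
        _ ≤ A * 1 := mul_le_mul_of_nonneg_left hb1 hA.le
        _ = A := mul_one A
    have hq3 : A * (4 * Real.pi ^ 2 / b + σ) = A * (4 * Real.pi ^ 2 / b) + A * σ := by ring
    have hq4 : 4 * Real.pi ^ 2 * A / b = A * (4 * Real.pi ^ 2 / b) := by ring
    have hq5 : 4 * Real.pi ^ 2 * A / bb = A * (4 * Real.pi ^ 2 / bb) := by ring
    have hq6 : σ * (A - ε) = A * σ - ε * σ := by ring
    have hAb : 0 ≤ A * b := mul_nonneg hA.le hb.le
    have hq7 : 4 * Real.pi ^ 2 * A / (4 * Real.pi ^ 2 / (4 * Real.pi ^ 2 / b + σ)) = A * (4 * Real.pi ^ 2 / b + σ) := by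
      rw [show 4 * Real.pi ^ 2 * A / (4 * Real.pi ^ 2 / (4 * Real.pi ^ 2 / b + σ)) = A * (4 * Real.pi ^ 2 / (4 * Real.pi ^ 2 / (4 * Real.pi ^ 2 / b + σ))) by ring, hid2]
    have hq8 : 4 * Real.pi ^ 2 * A / (4 * Real.pi ^ 2 / b + σ) = A * (4 * Real.pi ^ 2 / (4 * Real.pi ^ 2 / b + σ)) := by ring
    have hq9 : (1 - bb) * T = T - T * bb := by ring
    have hTbb : T * bb = T * Fb + 4 * Real.pi ^ 2 * A / b - 3 / 2 * Real.log b := by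
      rw [hFbdef]; simp only [bfrak]; field_simp; ring
    have hσ2 : A * σ - ε * σ ≤ T / 2 * Fb := by
      calc A * σ - ε * σ = (A - ε) * σ := by ring
        _ ≤ (A - ε) * (δ * Fb) := mul_le_mul_of_nonneg_left hσδ hAε.le
        _ = T / 2 * Fb := by rw [hδdef]; field_simp
    have hexpA : (4 * Real.pi ^ 2 * A / b + 4 * Real.pi ^ 2 * A / bb - A * b - A * bb) + σ * (A - ε) + (4 * Real.pi ^ 2 * A / (4 * Real.pi ^ 2 / b + σ) + 4 * Real.pi ^ 2 * A / (4 * Real.pi ^ 2 / bb) - A * (4 * Real.pi ^ 2 / b + σ) - A * (4 * Real.pi ^ 2 / bb)) ≤ A + -(ε * σ) := by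
      linarith [hq1, hq2, hq3, hq4, hq5, hq6, hAb]
    have hexpS : (4 * Real.pi ^ 2 * A / b + 4 * Real.pi ^ 2 * A / bb - A * b - A * bb) + σ * (A - ε) + (4 * Real.pi ^ 2 * A / (4 * Real.pi ^ 2 / b + σ) + 4 * Real.pi ^ 2 * A / (4 * Real.pi ^ 2 / bb) - A * (4 * Real.pi ^ 2 / b + σ) - A * (4 * Real.pi ^ 2 / bb)) + (1 - bb) * T + (4 * Real.pi ^ 2 * A / (4 * Real.pi ^ 2 / (4 * Real.pi ^ 2 / b + σ)) + 4 * Real.pi ^ 2 * A / 1 - A * (4 * Real.pi ^ 2 / (4 * Real.pi ^ 2 / b + σ)) - A * 1) ≤ 4 * Real.pi ^ 2 * A + T + -(T / 2 * Fb) + 3 / 2 * Real.log b := by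
      linarith [hq1, hq3, hq4, hq5, hq6, hq7, hq8, hq9, hTbb, hσ2, hAb, hA.le]
    -- sqrt facts
    have d1 : (0:ℝ) < Real.sqrt (b * bb) := Real.sqrt_pos.2 (mul_pos hb hbb)
    have d2 : (0:ℝ) < Real.sqrt ((4 * Real.pi ^ 2 / b + σ) * (4 * Real.pi ^ 2 / bb)) :=
      Real.sqrt_pos.2 (mul_pos hbσ hbb'pos)
    have hP : (2 * Real.pi / Real.sqrt (b * bb)) * (2 * Real.pi / Real.sqrt ((4 * Real.pi ^ 2 / b + σ) * (4 * Real.pi ^ 2 / bb))) ≤ 1 := by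
      rw [div_mul_div_comm, div_le_one (mul_pos d1 d2),
        ← Real.sqrt_mul (mul_pos hb hbb).le]
      have e2 : (b * bb) * ((4 * Real.pi ^ 2 / b + σ) * (4 * Real.pi ^ 2 / bb))
          = (2 * Real.pi * (2 * Real.pi)) ^ 2 + (b * bb) * (σ * (4 * Real.pi ^ 2 / bb)) := by
        field_simp
        ring
      calc 2 * Real.pi * (2 * Real.pi)
          = Real.sqrt ((2 * Real.pi * (2 * Real.pi)) ^ 2) := (Real.sqrt_sq (by positivity)).symm
        _ ≤ Real.sqrt ((b * bb) * ((4 * Real.pi ^ 2 / b + σ) * (4 * Real.pi ^ 2 / bb))) := by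
            refine Real.sqrt_le_sqrt ?_
            have := mul_nonneg (mul_pos hb hbb).le (mul_nonneg hσ0 hbb'pos.le)
            linarith [e2, this]
    have hsq : Real.sqrt (b * bb) * Real.sqrt ((4 * Real.pi ^ 2 / b + σ) * (4 * Real.pi ^ 2 / bb)) *
        Real.sqrt (4 * Real.pi ^ 2 / (4 * Real.pi ^ 2 / b + σ) * 1) = 4 * Real.pi ^ 2 * Real.sqrt b := by
      rw [← Real.sqrt_mul (mul_pos hb hbb).le,
        ← Real.sqrt_mul (by positivity : (0:ℝ) ≤ b * bb * ((4 * Real.pi ^ 2 / b + σ) * (4 * Real.pi ^ 2 / bb)))]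
      rw [show b * bb * ((4 * Real.pi ^ 2 / b + σ) * (4 * Real.pi ^ 2 / bb)) * ((4 * Real.pi ^ 2 / (4 * Real.pi ^ 2 / b + σ)) * 1)
          = (4 * Real.pi ^ 2) ^ 2 * b by field_simp]
      rw [Real.sqrt_mul (by positivity : (0:ℝ) ≤ (4 * Real.pi ^ 2) ^ 2), Real.sqrt_sq hπ2.le]
    have hsqrtbne : Real.sqrt b ≠ 0 := (Real.sqrt_pos.2 hb).ne'
    have hQ : 1 / b * ((2 * Real.pi / Real.sqrt (b * bb)) * (2 * Real.pi / Real.sqrt ((4 * Real.pi ^ 2 / b + σ) * (4 * Real.pi ^ 2 / bb))) * (2 * Real.pi / Real.sqrt (4 * Real.pi ^ 2 / (4 * Real.pi ^ 2 / b + σ) * 1))) * (b * Real.sqrt b) = 2 * Real.pi := by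
      rw [div_mul_div_comm, div_mul_div_comm, hsq]
      field_simp
      ring
    have hexp32 : Real.exp (3 / 2 * Real.log b) = b * Real.sqrt b := by
      rw [show (3 / 2 : ℝ) * Real.log b = Real.log b + Real.log b * (1 / 2) by ring,
        Real.exp_add, Real.exp_log hb]
      congr 1
      rw [Real.sqrt_eq_rpow, Real.rpow_def_of_pos hb]
    -- claim 1
    have claim1 : 1 / b * Kker A b bb * Real.exp (σ * (A - ε)) *
        Kker A (4 * Real.pi ^ 2 / b + σ) (4 * Real.pi ^ 2 / bb) * b ≤ Real.exp A * Real.exp (-(ε * σ)) := by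
      rw [hK1, hK2]
      calc 1 / b * ((2 * Real.pi / Real.sqrt (b * bb)) * Real.exp (4 * Real.pi ^ 2 * A / b + 4 * Real.pi ^ 2 * A / bb - A * b - A * bb)) * Real.exp (σ * (A - ε)) *
            ((2 * Real.pi / Real.sqrt ((4 * Real.pi ^ 2 / b + σ) * (4 * Real.pi ^ 2 / bb))) * Real.exp (4 * Real.pi ^ 2 * A / (4 * Real.pi ^ 2 / b + σ) + 4 * Real.pi ^ 2 * A / (4 * Real.pi ^ 2 / bb) - A * (4 * Real.pi ^ 2 / b + σ) - A * (4 * Real.pi ^ 2 / bb))) * b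
          = (b * (1 / b)) * (((2 * Real.pi / Real.sqrt (b * bb)) * (2 * Real.pi / Real.sqrt ((4 * Real.pi ^ 2 / b + σ) * (4 * Real.pi ^ 2 / bb)))) *
              (Real.exp (4 * Real.pi ^ 2 * A / b + 4 * Real.pi ^ 2 * A / bb - A * b - A * bb) * Real.exp (σ * (A - ε)) * Real.exp (4 * Real.pi ^ 2 * A / (4 * Real.pi ^ 2 / b + σ) + 4 * Real.pi ^ 2 * A / (4 * Real.pi ^ 2 / bb) - A * (4 * Real.pi ^ 2 / b + σ) - A * (4 * Real.pi ^ 2 / bb)))) := by ring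
        _ = ((2 * Real.pi / Real.sqrt (b * bb)) * (2 * Real.pi / Real.sqrt ((4 * Real.pi ^ 2 / b + σ) * (4 * Real.pi ^ 2 / bb)))) *
              (Real.exp (4 * Real.pi ^ 2 * A / b + 4 * Real.pi ^ 2 * A / bb - A * b - A * bb) * Real.exp (σ * (A - ε)) * Real.exp (4 * Real.pi ^ 2 * A / (4 * Real.pi ^ 2 / b + σ) + 4 * Real.pi ^ 2 * A / (4 * Real.pi ^ 2 / bb) - A * (4 * Real.pi ^ 2 / b + σ) - A * (4 * Real.pi ^ 2 / bb))) := by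
            rw [mul_one_div_cancel hb.ne', one_mul]
        _ = ((2 * Real.pi / Real.sqrt (b * bb)) * (2 * Real.pi / Real.sqrt ((4 * Real.pi ^ 2 / b + σ) * (4 * Real.pi ^ 2 / bb)))) * Real.exp ((4 * Real.pi ^ 2 * A / b + 4 * Real.pi ^ 2 * A / bb - A * b - A * bb) + σ * (A - ε) + (4 * Real.pi ^ 2 * A / (4 * Real.pi ^ 2 / b + σ) + 4 * Real.pi ^ 2 * A / (4 * Real.pi ^ 2 / bb) - A * (4 * Real.pi ^ 2 / b + σ) - A * (4 * Real.pi ^ 2 / bb))) := by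
            rw [← Real.exp_add, ← Real.exp_add]
        _ ≤ 1 * Real.exp (A + -(ε * σ)) :=
            mul_le_mul hP (Real.exp_le_exp.2 hexpA) (Real.exp_nonneg _) zero_le_one
        _ = Real.exp A * Real.exp (-(ε * σ)) := by rw [one_mul, Real.exp_add]
    -- claim 1'
    have claim1' : Real.exp (-(ε * σ)) ≤
        Real.exp (-(ε * (δ * Fb))) + Real.exp (-(ε * (4 * Real.pi ^ 2 / b))) := by
      rcases le_total (δ * Fb) (4 * Real.pi ^ 2 / b) with h | h
      · rw [show σ = δ * Fb from min_eq_left h]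
        exact le_add_of_nonneg_right (Real.exp_nonneg _)
      · rw [show σ = 4 * Real.pi ^ 2 / b from min_eq_right h]
        exact le_add_of_nonneg_left (Real.exp_nonneg _)
    -- claim 2
    have claim2 : 1 / b * Kker A b bb * Real.exp (σ * (A - ε)) *
        Kker A (4 * Real.pi ^ 2 / b + σ) (4 * Real.pi ^ 2 / bb) *
        (Real.exp ((1 - bb) * T) * (Kker A (4 * Real.pi ^ 2 / (4 * Real.pi ^ 2 / b + σ)) 1 * (1 + D)))
        ≤ C2 * Real.exp (-(T / 2 * Fb)) := by
      rw [hK1, hK2, hK3]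
      calc 1 / b * ((2 * Real.pi / Real.sqrt (b * bb)) * Real.exp (4 * Real.pi ^ 2 * A / b + 4 * Real.pi ^ 2 * A / bb - A * b - A * bb)) * Real.exp (σ * (A - ε)) *
            ((2 * Real.pi / Real.sqrt ((4 * Real.pi ^ 2 / b + σ) * (4 * Real.pi ^ 2 / bb))) * Real.exp (4 * Real.pi ^ 2 * A / (4 * Real.pi ^ 2 / b + σ) + 4 * Real.pi ^ 2 * A / (4 * Real.pi ^ 2 / bb) - A * (4 * Real.pi ^ 2 / b + σ) - A * (4 * Real.pi ^ 2 / bb))) *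
            (Real.exp ((1 - bb) * T) * ((2 * Real.pi / Real.sqrt (4 * Real.pi ^ 2 / (4 * Real.pi ^ 2 / b + σ) * 1)) * Real.exp (4 * Real.pi ^ 2 * A / (4 * Real.pi ^ 2 / (4 * Real.pi ^ 2 / b + σ)) + 4 * Real.pi ^ 2 * A / 1 - A * (4 * Real.pi ^ 2 / (4 * Real.pi ^ 2 / b + σ)) - A * 1) * (1 + D)))
          = 1 / b * ((2 * Real.pi / Real.sqrt (b * bb)) * (2 * Real.pi / Real.sqrt ((4 * Real.pi ^ 2 / b + σ) * (4 * Real.pi ^ 2 / bb))) * (2 * Real.pi / Real.sqrt (4 * Real.pi ^ 2 / (4 * Real.pi ^ 2 / b + σ) * 1))) * Real.exp ((4 * Real.pi ^ 2 * A / b + 4 * Real.pi ^ 2 * A / bb - A * b - A * bb) + σ * (A - ε) + (4 * Real.pi ^ 2 * A / (4 * Real.pi ^ 2 / b + σ) + 4 * Real.pi ^ 2 * A / (4 * Real.pi ^ 2 / bb) - A * (4 * Real.pi ^ 2 / b + σ) - A * (4 * Real.pi ^ 2 / bb)) + (1 - bb) * T + (4 * Real.pi ^ 2 * A / (4 * Real.pi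 ^ 2 / (4 * Real.pi ^ 2 / b + σ)) + 4 * Real.pi ^ 2 * A / 1 - A * (4 * Real.pi ^ 2 / (4 * Real.pi ^ 2 / b + σ)) - A * 1)) * (1 + D) := by
            rw [Real.exp_add, Real.exp_add, Real.exp_add, Real.exp_add]; ring
        _ ≤ 1 / b * ((2 * Real.pi / Real.sqrt (b * bb)) * (2 * Real.pi / Real.sqrt ((4 * Real.pi ^ 2 / b + σ) * (4 * Real.pi ^ 2 / bb))) * (2 * Real.pi / Real.sqrt (4 * Real.pi ^ 2 / (4 * Real.pi ^ 2 / b + σ) * 1))) *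
              (Real.exp (4 * Real.pi ^ 2 * A + T + -(T / 2 * Fb)) * (b * Real.sqrt b)) * (1 + D) := by
            refine mul_le_mul_of_nonneg_right (mul_le_mul_of_nonneg_left ?_ ?_) (by linarith)
            · rw [← hexp32, ← Real.exp_add]
              exact Real.exp_le_exp.2 hexpS
            · exact mul_nonneg (one_div_nonneg.2 hb.le) (by positivity)
        _ = C2 * Real.exp (-(T / 2 * Fb)) := by
            rw [show 4 * Real.pi ^ 2 * A + T + -(T / 2 * Fb) = (4 * Real.pi ^ 2 * A + T) + -(T / 2 * Fb) by ring,
              Real.exp_add]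
            calc 1 / b * ((2 * Real.pi / Real.sqrt (b * bb)) * (2 * Real.pi / Real.sqrt ((4 * Real.pi ^ 2 / b + σ) * (4 * Real.pi ^ 2 / bb))) * (2 * Real.pi / Real.sqrt (4 * Real.pi ^ 2 / (4 * Real.pi ^ 2 / b + σ) * 1))) *
                  (Real.exp (4 * Real.pi ^ 2 * A + T) * Real.exp (-(T / 2 * Fb)) * (b * Real.sqrt b)) * (1 + D)
                = (1 / b * ((2 * Real.pi / Real.sqrt (b * bb)) * (2 * Real.pi / Real.sqrt ((4 * Real.pi ^ 2 / b + σ) * (4 * Real.pi ^ 2 / bb))) * (2 * Real.pi / Real.sqrt (4 * Real.pi ^ 2 / (4 * Real.pi ^ 2 / b + σ) * 1))) * (b * Real.sqrt b)) *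
                    (Real.exp (4 * Real.pi ^ 2 * A + T) * (1 + D) * Real.exp (-(T / 2 * Fb))) := by ring
              _ = 2 * Real.pi *
                    (Real.exp (4 * Real.pi ^ 2 * A + T) * (1 + D) * Real.exp (-(T / 2 * Fb))) := by rw [hQ]
              _ = C2 * Real.exp (-(T / 2 * Fb)) := by rw [hC2def]; ring
    -- assemble
    have hsplit : 1 / b * Kker A b bb * (Real.exp (σ * (A - ε)) *
          (Kker A (4 * Real.pi ^ 2 / b + σ) (4 * Real.pi ^ 2 / bb) *
            (b + Real.exp ((1 - bb) * T) * (Kker A (4 * Real.pi ^ 2 / (4 * Real.pi ^ 2 / b + σ)) 1 * (1 + D)))))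
        = 1 / b * Kker A b bb * Real.exp (σ * (A - ε)) *
            Kker A (4 * Real.pi ^ 2 / b + σ) (4 * Real.pi ^ 2 / bb) * b
          + 1 / b * Kker A b bb * Real.exp (σ * (A - ε)) *
            Kker A (4 * Real.pi ^ 2 / b + σ) (4 * Real.pi ^ 2 / bb) *
            (Real.exp ((1 - bb) * T) * (Kker A (4 * Real.pi ^ 2 / (4 * Real.pi ^ 2 / b + σ)) 1 * (1 + D))) := by ring
    refine le_trans (mul_le_mul_of_nonneg_left hIb
      (mul_nonneg (one_div_nonneg.2 hb.le) (hKnn b bb))) ?_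
    simp only [hgdef]
    rw [← hbdef, ← hbbdef, ← hFbdef, hsplit]
    refine add_le_add (claim1.trans ?_) claim2
    exact mul_le_mul_of_nonneg_left claim1' (Real.exp_nonneg _)
end

section
/- Under the modular setup below, for every Λ > 0, along every sequence (β_n, β̄_n) in (0,∞)² tending to the M* limit (i.e. β_n → 0, β̄_n → ∞, 𝔟(β_n, β̄_n) → ∞), one has (1/β_n) · K(β_n, β̄_n) · ∫_{ {(h,h̄) : h ≤ Λ and h̄ ≤ Λ} } e^{ −(4π²/β_n) h − (4π²/β̄_n) h̄ } dμ(h, h̄) → 0. -/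
open MeasureTheory Filter

/-- Auxiliary: the `1/β · K · e^{-4π²T/β}` prefactor as a single exponential. -/
lemma stmt19_aux_exp_eq (A T : ℝ) {β βb : ℝ} (hβ : 0 < β) (hβb : 0 < βb) :
    1 / β * (2 * Real.pi / Real.sqrt (β * βb) *
        Real.exp (4 * Real.pi ^ 2 * A / β + 4 * Real.pi ^ 2 * A / βb - A * β - A * βb)) *
      Real.exp (-(4 * Real.pi ^ 2 / β) * T)
    = 2 * Real.pi * Real.exp (4 * Real.pi ^ 2 * A / β + 4 * Real.pi ^ 2 * A / βb - A * β
        - A * βb - 4 * Real.pi ^ 2 * T / β - 3 / 2 * Real.log β - 1 / 2 * Real.log βb) := by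
  obtain ⟨u, hu⟩ : ∃ u, Real.exp u = β := ⟨Real.log β, Real.exp_log hβ⟩
  obtain ⟨v, hv⟩ : ∃ v, Real.exp v = βb := ⟨Real.log βb, Real.exp_log hβb⟩
  subst hu hv
  have hs : Real.sqrt (Real.exp u * Real.exp v) = Real.exp ((u + v) * (1 / 2)) := by
    rw [← Real.exp_add, Real.sqrt_eq_rpow, Real.rpow_def_of_pos (Real.exp_pos _),
      Real.log_exp]
  rw [hs, Real.log_exp, Real.log_exp]
  rw [show 4 * Real.pi ^ 2 * A / Real.exp u + 4 * Real.pi ^ 2 * A / Real.exp v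
        - A * Real.exp u - A * Real.exp v - 4 * Real.pi ^ 2 * T / Real.exp u
        - 3 / 2 * u - 1 / 2 * v
      = (4 * Real.pi ^ 2 * A / Real.exp u + 4 * Real.pi ^ 2 * A / Real.exp v
        - A * Real.exp u - A * Real.exp v) + (-(4 * Real.pi ^ 2 / Real.exp u) * T)
        + (-u) + (-((u + v) * (1 / 2))) from by ring]
  rw [Real.exp_add, Real.exp_add, Real.exp_add, Real.exp_neg, Real.exp_neg]
  field_simp

/-- Auxiliary: the exponent tends to `-∞` in the M* limit. -/
lemma stmt19_aux_tendsto (A T : ℝ) (hA : 0 < A) (hT : 0 < T)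
    (β βb : ℕ → ℝ) (hβpos : ∀ n, 0 < β n) (hβbpos : ∀ n, 0 < βb n)
    (hβ0 : Tendsto β atTop (nhds 0)) (hβb : Tendsto βb atTop atTop)
    (hM : Tendsto (fun n => bfrak A T (β n) (βb n)) atTop atTop) :
    Tendsto (fun n => 4 * Real.pi ^ 2 * A / β n + 4 * Real.pi ^ 2 * A / βb n - A * β n
        - A * βb n - 4 * Real.pi ^ 2 * T / β n - 3 / 2 * Real.log (β n)
        - 1 / 2 * Real.log (βb n)) atTop atBot := by
  set c : ℝ := 4 * Real.pi ^ 2 * (T - A + A ^ 2 / T) with hc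
  set k : ℝ := 3 * A / (2 * T) - 3 / 2 with hk
  have hπ := Real.pi_pos
  have hcpos : 0 < c := by
    have h1 : 0 < T - A + A ^ 2 / T := by
      have heq : T - A + A ^ 2 / T = (T ^ 2 - A * T + A ^ 2) / T := by
        field_simp
      rw [heq]
      exact div_pos (by nlinarith [sq_nonneg (A - T)]) hT
    positivity
  -- t n := (β n)⁻¹ → ∞
  have ht : Tendsto (fun n => (β n)⁻¹) atTop atTop := by
    refine tendsto_inv_nhdsGT_zero.comp ?_
    exact tendsto_nhdsWithin_iff.mpr ⟨hβ0, Eventually.of_forall fun n => hβpos n⟩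
  -- P := -c/β + k log β → -∞
  have hlogdiv : Tendsto (fun x : ℝ => Real.log x / x) atTop (nhds 0) := by
    simpa using Real.isLittleO_log_id_atTop.tendsto_div_nhds_zero
  have hfac : Tendsto (fun n => -c - k * (Real.log ((β n)⁻¹) / (β n)⁻¹)) atTop
      (nhds (-c - k * 0)) :=
    tendsto_const_nhds.sub ((hlogdiv.comp ht).const_mul k)
  have hP : Tendsto (fun n => -c * (β n)⁻¹ + k * Real.log (β n)) atTop atBot := by
    have h0 : Tendsto (fun n => (β n)⁻¹ * (-c - k * (Real.log ((β n)⁻¹) / (β n)⁻¹)))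
        atTop atBot := by
      exact Tendsto.atTop_mul_neg (C := -c - k * 0) (by simpa using hcpos) ht hfac
    refine h0.congr fun n => ?_
    have hn : (β n) ≠ 0 := (hβpos n).ne'
    rw [Real.log_inv]
    field_simp
    ring
  -- Q := -(1/2) log βb + 4π²A/βb → -∞
  have hQ : Tendsto (fun n => -(1 / 2) * Real.log (βb n) + 4 * Real.pi ^ 2 * A / βb n)
      atTop atBot := by
    refine Tendsto.atBot_add ?_ (C := (0 : ℝ)) ?_
    · exact (Real.tendsto_log_atTop.comp hβb).const_mul_atTop_of_neg (by norm_num)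
    · have : Tendsto (fun n => (βb n)⁻¹) atTop (nhds 0) := tendsto_inv_atTop_zero.comp hβb
      simpa [div_eq_mul_inv] using this.const_mul (4 * Real.pi ^ 2 * A)
  -- R := -A · 𝔟 → -∞
  have hR : Tendsto (fun n => -A * bfrak A T (β n) (βb n)) atTop atBot :=
    hM.const_mul_atTop_of_neg (by linarith)
  -- S := -A β → 0
  have hS : Tendsto (fun n => -A * β n) atTop (nhds 0) := by
    simpa using hβ0.const_mul (-A)
  have hsum : Tendsto (fun n => (-c * (β n)⁻¹ + k * Real.log (β n))
      + (-(1 / 2) * Real.log (βb n) + 4 * Real.pi ^ 2 * A / βb n)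
      + (-A * bfrak A T (β n) (βb n)) + (-A * β n)) atTop atBot :=
    Tendsto.atBot_add (Tendsto.atBot_add_atBot (Tendsto.atBot_add_atBot hP hQ) hR) hS
  refine hsum.congr fun n => ?_
  have hn : (β n) ≠ 0 := (hβpos n).ne'
  rw [bfrak, hc, hk]
  field_simp
  ring

/-- Lemma 3.5: for every `Λ > 0`, along sequences in the M* limit
(`β → 0`, `β̄ → ∞`, `𝔟 → ∞`), the crossed-channel contribution of all states with
`h, h̄ ≤ Λ` is `o(β)`; valid for discrete and continuous spectra. -/
theorem stmt19 (A T : ℝ) (hA : 0 < A) (hT : 0 < T) (μ : Measure (ℝ × ℝ))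
    (hsupp : μ {p : ℝ × ℝ | p.1 < T ∨ p.2 < T} = 0)
    (hint : ∀ β βb : ℝ, 0 < β → 0 < βb →
      Integrable (fun p : ℝ × ℝ => Real.exp (-β * p.1 - βb * p.2)) μ)
    (hmod : ∀ β βb : ℝ, 0 < β → 0 < βb →
      Ztil μ β βb = Kker A β βb * Ztil μ (4 * Real.pi ^ 2 / β) (4 * Real.pi ^ 2 / βb))
    (Λ : ℝ) (hΛ : 0 < Λ)
    (β βb : ℕ → ℝ) (hβpos : ∀ n, 0 < β n) (hβbpos : ∀ n, 0 < βb n)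
    (hβ0 : Tendsto β atTop (nhds 0)) (hβb : Tendsto βb atTop atTop)
    (hM : Tendsto (fun n => bfrak A T (β n) (βb n)) atTop atTop) :
    Tendsto
      (fun n => (1 / β n) * Kker A (β n) (βb n) *
        ∫ p in {p : ℝ × ℝ | p.1 ≤ Λ ∧ p.2 ≤ Λ},
          Real.exp (-(4 * Real.pi ^ 2 / β n) * p.1 - (4 * Real.pi ^ 2 / βb n) * p.2) ∂μ)
      atTop (nhds 0) := by
  classical
  set S : Set (ℝ × ℝ) := {p : ℝ × ℝ | p.1 ≤ Λ ∧ p.2 ≤ Λ} with hSdef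
  set S' : Set (ℝ × ℝ) := {p : ℝ × ℝ | (T ≤ p.1 ∧ p.1 ≤ Λ) ∧ (T ≤ p.2 ∧ p.2 ≤ Λ)}
    with hS'def
  have hmS' : MeasurableSet S' := by
    rw [hS'def]
    simp only [Set.setOf_and]
    exact ((measurableSet_le measurable_const measurable_fst).inter
        (measurableSet_le measurable_fst measurable_const)).inter
      ((measurableSet_le measurable_const measurable_snd).inter
        (measurableSet_le measurable_snd measurable_const))
  have hmS : MeasurableSet S := by
    rw [hSdef]
    simp only [Set.setOf_and]
    exact (measurableSet_le measurable_fst measurable_const).inter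
      (measurableSet_le measurable_snd measurable_const)
  have hae : S =ᵐ[μ] S' := by
    rw [MeasureTheory.ae_eq_set]
    constructor
    · refine measure_mono_null ?_ hsupp
      intro p hp
      simp only [hSdef, hS'def, Set.mem_diff, Set.mem_setOf_eq] at hp ⊢
      by_contra h
      push_neg at h
      exact hp.2 ⟨⟨h.1, hp.1.1⟩, h.2, hp.1.2⟩
    · have hsub : S' \ S = ∅ :=
        Set.diff_eq_empty.mpr fun p hp => ⟨hp.1.2, hp.2.2⟩
      simp [hsub]
  -- finiteness of μ S'
  have hint11 : Integrable (fun p : ℝ × ℝ =>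
      Real.exp (2 * Λ) * Real.exp (-p.1 - p.2)) μ := by
    have h := hint 1 1 one_pos one_pos
    simp only [neg_mul, one_mul] at h
    exact h.const_mul _
  have hfin : μ S' < ⊤ := by
    calc μ S' = ∫⁻ p in S', 1 ∂μ := (setLIntegral_one _).symm
      _ ≤ ∫⁻ p in S', ENNReal.ofReal
            (Real.exp (2 * Λ) * Real.exp (-p.1 - p.2)) ∂μ := by
          refine setLIntegral_mono (by fun_prop) ?_
          intro p hp
          rw [show (1 : ENNReal) = ENNReal.ofReal 1 from ENNReal.ofReal_one.symm]
          apply ENNReal.ofReal_le_ofReal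
          rw [← Real.exp_add]
          apply Real.one_le_exp
          obtain ⟨⟨_, h1⟩, _, h2⟩ := hp
          linarith
      _ ≤ ∫⁻ p, ENNReal.ofReal
            (Real.exp (2 * Λ) * Real.exp (-p.1 - p.2)) ∂μ :=
          setLIntegral_le_lintegral _ _
      _ < ⊤ := hint11.lintegral_lt_top
  set Mc : ℝ := (μ S').toReal with hMc
  have hbound : ∀ n,
      (∫ p in S, Real.exp (-(4 * Real.pi ^ 2 / β n) * p.1
          - (4 * Real.pi ^ 2 / βb n) * p.2) ∂μ)
        ≤ Real.exp (-(4 * Real.pi ^ 2 / β n) * T) * Mc := by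
    intro n
    rw [setIntegral_congr_set hae]
    refine le_trans (le_abs_self _) ?_
    rw [← Real.norm_eq_abs]
    refine norm_setIntegral_le_of_norm_le_const hfin ?_
    intro p hp
    rw [Real.norm_eq_abs, abs_of_nonneg (Real.exp_pos _).le]
    apply Real.exp_le_exp.mpr
    obtain ⟨⟨h1, _⟩, h2, _⟩ := hp
    have ha : 0 < 4 * Real.pi ^ 2 / β n := div_pos (by positivity) (hβpos n)
    have hb : 0 < 4 * Real.pi ^ 2 / βb n := div_pos (by positivity) (hβbpos n)
    have k1 := mul_le_mul_of_nonneg_left h1 ha.le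
    have k2 : 0 ≤ 4 * Real.pi ^ 2 / βb n * p.2 :=
      mul_nonneg hb.le (le_trans hT.le h2)
    linarith
  have hKnn : ∀ n, 0 ≤ 1 / β n * Kker A (β n) (βb n) := by
    intro n
    rw [Kker]
    have := (hβpos n).le
    positivity
  have hlow : ∀ n, (0 : ℝ) ≤ 1 / β n * Kker A (β n) (βb n) *
      ∫ p in S, Real.exp (-(4 * Real.pi ^ 2 / β n) * p.1
        - (4 * Real.pi ^ 2 / βb n) * p.2) ∂μ := by
    intro n
    exact mul_nonneg (hKnn n)
      (setIntegral_nonneg hmS fun p _ => (Real.exp_pos _).le)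
  have hup : ∀ n, 1 / β n * Kker A (β n) (βb n) *
      (∫ p in S, Real.exp (-(4 * Real.pi ^ 2 / β n) * p.1
        - (4 * Real.pi ^ 2 / βb n) * p.2) ∂μ)
      ≤ 1 / β n * Kker A (β n) (βb n) *
        (Real.exp (-(4 * Real.pi ^ 2 / β n) * T) * Mc) :=
    fun n => mul_le_mul_of_nonneg_left (hbound n) (hKnn n)
  have hFeq : ∀ n, 1 / β n * Kker A (β n) (βb n) *
      (Real.exp (-(4 * Real.pi ^ 2 / β n) * T) * Mc)
      = 2 * Real.pi * Mc * Real.exp (4 * Real.pi ^ 2 * A / β n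
          + 4 * Real.pi ^ 2 * A / βb n - A * β n - A * βb n
          - 4 * Real.pi ^ 2 * T / β n - 3 / 2 * Real.log (β n)
          - 1 / 2 * Real.log (βb n)) := by
    intro n
    have haux := stmt19_aux_exp_eq A T (hβpos n) (hβbpos n)
    rw [Kker]
    calc 1 / β n * (2 * Real.pi / Real.sqrt (β n * βb n) *
          Real.exp (4 * Real.pi ^ 2 * A / β n + 4 * Real.pi ^ 2 * A / βb n
            - A * β n - A * βb n)) *
          (Real.exp (-(4 * Real.pi ^ 2 / β n) * T) * Mc)
        = 1 / β n * (2 * Real.pi / Real.sqrt (β n * βb n) *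
            Real.exp (4 * Real.pi ^ 2 * A / β n + 4 * Real.pi ^ 2 * A / βb n
              - A * β n - A * βb n)) *
            Real.exp (-(4 * Real.pi ^ 2 / β n) * T) * Mc := by ring
      _ = _ := by rw [haux]; ring
  have hL := stmt19_aux_tendsto A T hA hT β βb hβpos hβbpos hβ0 hβb hM
  have hF : Tendsto (fun n => 1 / β n * Kker A (β n) (βb n) *
      (Real.exp (-(4 * Real.pi ^ 2 / β n) * T) * Mc)) atTop (nhds 0) := by
    have h1 := (Real.tendsto_exp_atBot.comp hL).const_mul (2 * Real.pi * Mc)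
    refine Tendsto.congr (fun n => (hFeq n).symm) ?_
    simpa using h1
  exact tendsto_of_tendsto_of_tendsto_of_le_of_le tendsto_const_nhds hF hlow hup
end
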